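/- arXiv:1605.09659 — 4 statements merged into one kernel-verified Lean document; each statement's English description precedes it below -/
import Mathlib

section
/- Let K ⊆ L be finite fields with |K| = q and [L : K] = m, and let θ be a character of Lˣ in general position. Then the m characters θ^{(q^i)} for 0 ≤ i < m, defined by θ^{(q^i)}(y) = θ(y^{q^i}), are pairwise distinct; that is, the orbit of θ under the Frobenius action on characters has exactly m elements. -/
open Finset in
lemma norm_eq_pow_sum (E L : Type*) [Field E] [Field L] [Fintype E] [Fintype L]
    [Algebra E L] (x : L) :
    algebraMap E L (Algebra.norm E x) =
      x ^ (∑ i ∈ Finset.range (Module.finrank E L), Fintype.card E ^ i) := by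
  classical
  set c := Fintype.card E with hcdef
  set r := Module.finrank E L with hrdef
  have hc2 : 2 ≤ c := Fintype.one_lt_card
  have hr0 : 0 < r := Module.finrank_pos
  obtain ⟨p, hpc⟩ := CharP.exists E
  haveI := hpc
  obtain ⟨e, hp, hce⟩ := FiniteField.card E p
  haveI : CharP L p := charP_of_injective_algebraMap (algebraMap E L).injective p
  haveI : Fact p.Prime := ⟨hp⟩
  haveI : ExpChar L p := ExpChar.prime hp
  let fr : L →+* L := iterateFrobenius L p (e : ℕ)
  have hfr : ∀ y : L, fr y = y ^ c := fun y => by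
    rw [iterateFrobenius_def, hcdef, hce]
  let ψ : L →ₐ[E] L :=
    { toRingHom := fr
      commutes' := fun a => by
        show fr (algebraMap E L a) = algebraMap E L a
        rw [hfr, ← map_pow, FiniteField.pow_card] }
  have hψbij : Function.Bijective ψ := Finite.injective_iff_bijective.mp fr.injective
  let φ : L ≃ₐ[E] L := AlgEquiv.ofBijective ψ hψbij
  have hφ : ∀ y : L, φ y = y ^ c := hfr
  have hφpow : ∀ (k : ℕ) (y : L), (φ ^ k) y = y ^ c ^ k := by
    intro k
    induction k with
    | zero => intro y; simp
    | succ k ih =>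
      intro y
      rw [pow_succ, AlgEquiv.mul_apply, hφ, map_pow, ih, ← pow_mul, ← pow_succ]
  obtain ⟨ζ, hζ⟩ := IsCyclic.exists_generator (α := Lˣ)
  have hordζ : orderOf (ζ : L) = c ^ r - 1 := by
    rw [orderOf_units, orderOf_eq_card_of_forall_mem_zpowers hζ, Nat.card_eq_fintype_card,
      Fintype.card_units, Module.card_eq_pow_finrank (K := E) (V := L)]
  have hinj : ∀ a b : ℕ, a < r → b < r → φ ^ a = φ ^ b → a = b := by
    intro a b ha hb hab
    by_contra hne
    wlog hlt : a < b generalizing a b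
    · exact this b a hb ha hab.symm (Ne.symm hne) (by omega)
    have h1 : (ζ : L) ^ c ^ a = (ζ : L) ^ c ^ b := by
      have := congrArg (fun σ : L ≃ₐ[E] L => σ (ζ : L)) hab
      simpa [hφpow] using this
    have hζne : (ζ : L) ≠ 0 := Units.ne_zero ζ
    have hle : c ^ a ≤ c ^ b := Nat.pow_le_pow_right (by omega) hlt.le
    have h2 : (ζ : L) ^ (c ^ b - c ^ a) = 1 := by
      have h3 : (ζ : L) ^ (c ^ a) * (ζ : L) ^ (c ^ b - c ^ a) = (ζ : L) ^ (c ^ a) * 1 := by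
        rw [← pow_add, Nat.add_sub_cancel' hle, mul_one, h1]
      exact mul_left_cancel₀ (pow_ne_zero _ hζne) h3
    have h3 : c ^ r - 1 ∣ c ^ b - c ^ a := hordζ ▸ orderOf_dvd_of_pow_eq_one h2
    have h4 : c ^ a < c ^ b := Nat.pow_lt_pow_right (by omega) hlt
    have h5 := Nat.le_of_dvd (by omega) h3
    have h6 : c ^ b < c ^ r := Nat.pow_lt_pow_right (by omega) hb
    have h7 : 0 < c ^ a := pow_pos (by omega) _
    omega
  have hcard_aut : Fintype.card (L ≃ₐ[E] L) = r := by
    rw [← Nat.card_eq_fintype_card]; exact IsGalois.card_aut_eq_finrank E L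
  have hordφ : orderOf φ = r := by
    have hdvd : orderOf φ ∣ r := hcard_aut ▸ orderOf_dvd_card
    by_contra hne
    have hlt : orderOf φ < r := Nat.lt_of_le_of_ne (Nat.le_of_dvd hr0 hdvd) hne
    have h0 : orderOf φ = 0 := hinj (orderOf φ) 0 hlt hr0 (by rw [pow_orderOf_eq_one, pow_zero])
    exact absurd h0 (orderOf_pos φ).ne'
  have hbij : Function.Bijective (fun k : Fin r => φ ^ (k : ℕ)) := by
    rw [Fintype.bijective_iff_injective_and_card]
    refine ⟨fun a b hab => Fin.ext (hinj a b a.isLt b.isLt hab), by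
      rw [Fintype.card_fin, hcard_aut]⟩
  rw [Algebra.norm_eq_prod_automorphisms,
    ← Fintype.prod_bijective _ hbij (fun k : Fin r => x ^ c ^ (k : ℕ)) _
      (fun k => (hφpow k x).symm),
    Finset.prod_pow_eq_pow_sum, Fin.sum_univ_eq_sum_range]

/-- A character `θ` of `Lˣ` is in *general position* (over `K`) if there is no proper
intermediate field `K ⊆ E ⊊ L` and character `θ'` of `Eˣ` with `θ = θ' ∘ N_{L/E}`,
where `N_{L/E} : Lˣ → Eˣ` is the norm map. -/
def IsGeneralPosition (K : Type*) {L : Type*} [Field K] [Field L] [Algebra K L]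
    (θ : Lˣ →* ℂˣ) : Prop :=
  ¬ ∃ (E : IntermediateField K L) (_ : E ≠ ⊤) (θ' : (↥E)ˣ →* ℂˣ),
      θ = θ'.comp (Units.map (Algebra.norm (↥E) : L →* ↥E))

/-- Let `K ⊆ L` be finite fields with `|K| = q` and `[L : K] = m`, and let `θ` be a
character of `Lˣ` in general position.  Then the `m` characters `θ^{(qⁱ)}` for
`0 ≤ i < m`, defined by `θ^{(qⁱ)} y = θ (y ^ qⁱ)`, are pairwise distinct; that is,
the orbit of `θ` under the Frobenius action on characters has exactly `m` elements. -/
theorem frobenius_orbit_of_general_position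
    (K L : Type*) [Field K] [Field L] [Fintype K] [Fintype L] [Algebra K L]
    (q m : ℕ) (hq : Fintype.card K = q) (hm : Module.finrank K L = m)
    (θ : Lˣ →* ℂˣ) (hθ : IsGeneralPosition K θ) :
    ∀ i j : ℕ, i < m → j < m →
      θ.comp (powMonoidHom (q ^ i)) = θ.comp (powMonoidHom (q ^ j)) → i = j := by
  classical
  have hq2 : 2 ≤ q := hq ▸ Fintype.one_lt_card
  suffices key : ∀ i j : ℕ, i < j → j < m →
      θ.comp (powMonoidHom (q ^ i)) = θ.comp (powMonoidHom (q ^ j)) → False by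
    intro i j hi hj h
    rcases lt_trichotomy i j with hij | hij | hij
    · exact absurd h (fun h => key i j hij hj h)
    · exact hij
    · exact absurd h.symm (fun h => key j i hij hi h)
  intro i j hij hj h
  apply hθ
  set d := j - i with hddef
  have hd0 : 0 < d := by omega
  have hdm : d < m := by omega
  set g := Nat.gcd d m with hgdef
  have hgd : g ∣ d := Nat.gcd_dvd_left d m
  have hgm : g ∣ m := Nat.gcd_dvd_right d m
  have hg0 : 0 < g := Nat.gcd_pos_of_pos_left _ hd0
  have hgltm : g < m := lt_of_le_of_lt (Nat.le_of_dvd hd0 hgd) hdm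
  have hm0 : 0 < m := by omega
  have hcardL : Fintype.card L = q ^ m := by
    rw [← hq, ← hm]; exact Module.card_eq_pow_finrank
  have hqm1 : 1 ≤ q ^ m := Nat.one_le_pow _ _ (by omega)
  have hqg1 : 1 ≤ q ^ g := Nat.one_le_pow _ _ (by omega)
  have hqd1 : 1 ≤ q ^ d := Nat.one_le_pow _ _ (by omega)
  have hqm2 : q ≤ q ^ m := Nat.le_self_pow hm0.ne' q
  have hqg2 : q ≤ q ^ g := Nat.le_self_pow hg0.ne' q
  -- Step 1: θ (z ^ q ^ d) = θ z for all z
  have hstep : ∀ z : Lˣ, θ (z ^ q ^ d) = θ z := by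
    intro z
    have hcop : (Nat.card Lˣ).Coprime (q ^ i) := by
      have h1 : Nat.card Lˣ = q ^ m - 1 := by
        rw [Nat.card_eq_fintype_card, Fintype.card_units, hcardL]
      rw [h1]
      apply Nat.Coprime.pow_right
      have h2 : Nat.Coprime (q ^ m - 1 + 1) (q ^ m - 1) :=
        Nat.coprime_self_add_left.mpr (Nat.coprime_one_left _)
      rw [Nat.sub_add_cancel hqm1] at h2
      exact Nat.Coprime.coprime_dvd_right (dvd_pow_self q hm0.ne') h2.symm
    obtain ⟨y, hy⟩ := hcop.pow_left_bijective.surjective z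
    have hky := DFunLike.congr_fun h y
    simp only [MonoidHom.comp_apply, powMonoidHom_apply] at hky
    have hji : j = i + d := by omega
    rw [hji, pow_add, pow_mul] at hky
    rw [← hy, ← hky]
  -- generator
  obtain ⟨ζ, hζ⟩ := IsCyclic.exists_generator (α := Lˣ)
  have hordζ : orderOf ζ = q ^ m - 1 := by
    rw [orderOf_eq_card_of_forall_mem_zpowers hζ, Nat.card_eq_fintype_card,
      Fintype.card_units, hcardL]
  have hordζL : orderOf (ζ : L) = q ^ m - 1 := by rw [orderOf_units, hordζ]
  set x := θ ζ with hxdef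
  have hx1 : x ^ (q ^ d - 1) = 1 := by
    have h1 : x ^ q ^ d = x := by rw [hxdef, ← map_pow, hstep]
    have h2 : x ^ (q ^ d - 1) * x = 1 * x := by
      rw [← pow_succ, Nat.sub_add_cancel hqd1, h1, one_mul]
    exact mul_right_cancel h2
  have hx2 : x ^ (q ^ m - 1) = 1 := by
    rw [hxdef, ← map_pow, ← hordζ, pow_orderOf_eq_one, map_one]
  set o := orderOf x with hodef
  have hod : o ∣ q ^ d - 1 := orderOf_dvd_of_pow_eq_one hx1
  have hom : o ∣ q ^ m - 1 := orderOf_dvd_of_pow_eq_one hx2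
  have hog : o ∣ q ^ g - 1 := by
    have hqo : ∀ k : ℕ, 1 ≤ q ^ k → o ∣ q ^ k - 1 → (q : ZMod o) ^ k = 1 := by
      intro k hk hdvd
      have h1 : ((q ^ k - 1 : ℕ) : ZMod o) = 0 :=
        (ZMod.natCast_eq_zero_iff _ _).mpr hdvd
      rw [Nat.cast_sub hk, Nat.cast_pow, Nat.cast_one, sub_eq_zero] at h1
      exact h1
    have hq_d : (q : ZMod o) ^ d = 1 := hqo d hqd1 hod
    have hq_m : (q : ZMod o) ^ m = 1 := hqo m hqm1 hom
    have hq_g : (q : ZMod o) ^ g = 1 := by rw [hgdef]; exact pow_gcd_eq_one.mpr ⟨hq_d, hq_m⟩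
    have h2 : ((q ^ g - 1 : ℕ) : ZMod o) = 0 := by
      rw [Nat.cast_sub hqg1, Nat.cast_pow, Nat.cast_one, hq_g, sub_self]
    exact (ZMod.natCast_eq_zero_iff _ _).mp h2
  -- the intermediate field E
  obtain ⟨p, hpc⟩ := CharP.exists K
  haveI := hpc
  obtain ⟨e, hp, hpe⟩ := FiniteField.card K p
  haveI : CharP L p := charP_of_injective_algebraMap (algebraMap K L).injective p
  haveI : Fact p.Prime := ⟨hp⟩
  haveI : ExpChar L p := ExpChar.prime hp
  have hqgp : q ^ g = p ^ ((e : ℕ) * g) := by rw [← hq, hpe, pow_mul]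
  let E₀ : Subalgebra K L :=
    { carrier := {y : L | y ^ q ^ g = y}
      mul_mem' := fun {a b} ha hb => by
        simp only [Set.mem_setOf_eq] at *
        rw [mul_pow, ha, hb]
      one_mem' := by simp
      add_mem' := fun {a b} ha hb => by
        simp only [Set.mem_setOf_eq] at *
        rw [hqgp] at ha hb ⊢
        rw [add_pow_char_pow, ha, hb]
      zero_mem' := by
        simp only [Set.mem_setOf_eq]
        exact zero_pow (by positivity)
      algebraMap_mem' := fun a => by
        simp only [Set.mem_setOf_eq]
        rw [← map_pow]
        congr 1
        rw [← hq]
        have hgen : ∀ k : ℕ, a ^ Fintype.card K ^ k = a := by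
          intro k
          induction k with
          | zero => simp
          | succ k ih => rw [pow_succ, pow_mul, ih, FiniteField.pow_card]
        exact hgen g }
  let E : IntermediateField K L := E₀.toIntermediateField (fun a ha => by
    show a⁻¹ ^ q ^ g = a⁻¹
    rw [inv_pow, ha])
  have hmemE : ∀ y : L, y ∈ E ↔ y ^ q ^ g = y := fun y => Iff.rfl
  -- E ≠ ⊤
  have hEne : E ≠ ⊤ := by
    intro htop
    have h1 : (ζ : L) ^ q ^ g = (ζ : L) := by
      rw [← hmemE, htop]; exact IntermediateField.mem_top
    have h2 : (ζ : L) ^ (q ^ g - 1) * (ζ : L) = 1 * (ζ : L) := by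
      rw [← pow_succ, Nat.sub_add_cancel hqg1, h1, one_mul]
    have h3 : (ζ : L) ^ (q ^ g - 1) = 1 := mul_right_cancel₀ (Units.ne_zero ζ) h2
    have h4 : q ^ m - 1 ∣ q ^ g - 1 := hordζL ▸ orderOf_dvd_of_pow_eq_one h3
    have h5 : q ^ g < q ^ m := Nat.pow_lt_pow_right (by omega) hgltm
    have h6 := Nat.le_of_dvd (by omega) h4
    omega
  letI : Fintype E := Fintype.ofFinite E
  set cE := Fintype.card E with hcEdef
  have hcE2 : 2 ≤ cE := Fintype.one_lt_card
  -- q ^ g - 1 ∣ cE - 1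
  have hdvd1 : q ^ g - 1 ∣ q ^ m - 1 := by
    have h1 := Nat.sub_dvd_pow_sub_pow (q ^ g) 1 (m / g)
    rwa [one_pow, ← pow_mul, Nat.mul_div_cancel' hgm] at h1
  set k0 := (q ^ m - 1) / (q ^ g - 1) with hk0def
  have hk0mul : (q ^ g - 1) * k0 = q ^ m - 1 := Nat.mul_div_cancel' hdvd1
  have hk00 : 0 < k0 := by
    rcases Nat.eq_zero_or_pos k0 with h1 | h1
    · rw [h1, mul_zero] at hk0mul; omega
    · exact h1
  have hu0 : (ζ ^ k0) ^ q ^ g = ζ ^ k0 := by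
    rw [← pow_mul]
    have h1 : k0 * q ^ g = (q ^ m - 1) + k0 := by
      calc k0 * q ^ g = k0 * ((q ^ g - 1) + 1) := by rw [Nat.sub_add_cancel hqg1]
      _ = (q ^ g - 1) * k0 + k0 := by ring
      _ = (q ^ m - 1) + k0 := by rw [hk0mul]
    rw [h1, pow_add, ← hordζ, pow_orderOf_eq_one, one_mul]
  have hz0mem : (ζ : L) ^ k0 ∈ E := by
    rw [hmemE]
    exact_mod_cast congrArg (Units.val) hu0
  have hk0dvd : k0 ∣ q ^ m - 1 := Dvd.intro_left _ hk0mul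
  have hordz0 : orderOf ((ζ : L) ^ k0) = q ^ g - 1 := by
    have h1 : orderOf (ζ ^ k0) = q ^ g - 1 := by
      rw [orderOf_pow, hordζ, Nat.gcd_eq_right hk0dvd, ← hk0mul, Nat.mul_div_cancel _ hk00]
    rw [← h1, ← orderOf_units, Units.val_pow_eq_pow_val]
  -- the unit of Eˣ
  have hz0ne : ((⟨(ζ : L) ^ k0, hz0mem⟩ : E)) ≠ 0 := by
    intro hcon
    have := congrArg (Subtype.val) hcon
    simp only at this
    exact pow_ne_zero k0 (Units.ne_zero ζ) this
  have hgcE : q ^ g - 1 ∣ cE - 1 := by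
    have hval : (algebraMap (↥E) L).toMonoidHom (⟨(ζ : L) ^ k0, hz0mem⟩ : E) = (ζ : L) ^ k0 := rfl
    have h1 : orderOf ((⟨(ζ : L) ^ k0, hz0mem⟩ : E)) = q ^ g - 1 := by
      have h1' := orderOf_injective (algebraMap (↥E) L).toMonoidHom
        (fun a b hab => (algebraMap (↥E) L).injective hab)
        (⟨(ζ : L) ^ k0, hz0mem⟩ : E)
      rw [hval] at h1'
      rw [← h1']
      exact hordz0
    have h2 : orderOf (Units.mk0 _ hz0ne) = q ^ g - 1 := by
      rw [← orderOf_units, Units.val_mk0, h1]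
    have h3 : orderOf (Units.mk0 _ hz0ne) ∣ Nat.card (↥E)ˣ := orderOf_dvd_natCard _
    rwa [h2, Nat.card_units, Nat.card_eq_fintype_card] at h3
  -- norm as power map
  set rE := Module.finrank E L with hrEdef
  set t := ∑ i ∈ Finset.range rE, cE ^ i with htdef
  have hnorm : ∀ y : L, algebraMap E L (Algebra.norm E y) = y ^ t :=
    fun y => norm_eq_pow_sum E L y
  have hcardL2 : q ^ m = cE ^ rE := by rw [← hcardL, hcEdef, hrEdef]; exact Module.card_eq_pow_finrank
  have ht : (cE - 1) * t = q ^ m - 1 := by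
    have h1 := geom_sum_mul (cE : ℤ) rE
    have h2 : (t : ℤ) = ∑ i ∈ Finset.range rE, (cE : ℤ) ^ i := by
      rw [htdef]; push_cast; rfl
    have h4 : ((q : ℤ)) ^ m = (cE : ℤ) ^ rE := by exact_mod_cast hcardL2
    have h3 : ((cE - 1 : ℕ) : ℤ) * (t : ℤ) = ((q ^ m - 1 : ℕ) : ℤ) := by
      rw [Nat.cast_sub (by omega : 1 ≤ cE), Nat.cast_sub hqm1, h2, Nat.cast_one,
        mul_comm, h1]
      push_cast
      rw [h4]
    exact_mod_cast h3
  have ht0 : 0 < t := by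
    rcases Nat.eq_zero_or_pos t with h1 | h1
    · rw [h1, mul_zero] at ht; omega
    · exact h1
  have htdvd : t ∣ q ^ m - 1 := Dvd.intro_left _ ht
  -- the norm monoid hom and unit map
  set N : L →* ↥E := (Algebra.norm (↥E) : L →* ↥E) with hNdef
  set f : Lˣ →* (↥E)ˣ := Units.map N with hfdef
  have hNval : ∀ y : L, algebraMap E L (N y) = y ^ t := hnorm
  -- kernel condition
  have hker : ∀ u : Lˣ, f u = 1 → θ u = 1 := by
    intro u hu
    have h1 : N (u : L) = 1 := by
      have := congrArg (Units.val) hu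
      rwa [hfdef, Units.coe_map, Units.val_one] at this
    have h2 : (u : L) ^ t = 1 := by
      rw [← hNval, h1, map_one]
    have h3 : u ^ t = 1 := Units.ext (by rw [Units.val_pow_eq_pow_val, h2, Units.val_one])
    obtain ⟨k, hk⟩ := hζ u
    have hk' : ζ ^ k = u := hk
    have h4 : ζ ^ (k * (t : ℤ)) = 1 := by
      rw [zpow_mul, hk', zpow_natCast, h3]
    have h5 : ((q ^ m - 1 : ℕ) : ℤ) ∣ k * (t : ℤ) := by
      rw [← hordζ]
      exact orderOf_dvd_iff_zpow_eq_one.mpr h4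
    rw [← ht] at h5
    have h6 : ((cE - 1 : ℕ) : ℤ) ∣ k := by
      have h7 : ((cE - 1 : ℕ) : ℤ) * (t : ℤ) ∣ k * (t : ℤ) := by
        exact_mod_cast h5
      exact (mul_dvd_mul_iff_right (by exact_mod_cast ht0.ne' : (t : ℤ) ≠ 0)).mp h7
    obtain ⟨s, hs⟩ := h6
    have hxcE : x ^ (cE - 1) = 1 :=
      orderOf_dvd_iff_pow_eq_one.mp (dvd_trans hog hgcE)
    rw [← hk, map_zpow, ← hxdef, hs, zpow_mul, zpow_natCast, hxcE, one_zpow]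
  -- surjectivity
  have hordw : orderOf (f ζ) = cE - 1 := by
    have h1 : orderOf ((ζ : L) ^ t) = cE - 1 := by
      have h1' : orderOf (ζ ^ t) = cE - 1 := by
        rw [orderOf_pow, hordζ, Nat.gcd_eq_right htdvd, ← ht, Nat.mul_div_cancel _ ht0]
      rw [← h1', ← orderOf_units, Units.val_pow_eq_pow_val]
    have h2 : (algebraMap (↥E) L).toMonoidHom ((f ζ : E)) = (ζ : L) ^ t := by
      show algebraMap (↥E) L ((f ζ : E)) = (ζ : L) ^ t
      rw [hfdef, Units.coe_map]
      exact hNval _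
    have h3 := orderOf_injective (algebraMap (↥E) L).toMonoidHom
      (fun a b hab => (algebraMap (↥E) L).injective hab) ((f ζ : E))
    rw [h2] at h3
    rw [← orderOf_units (y := f ζ), ← h3]
    exact h1
  have hsurj : Function.Surjective f := by
    have htop : Subgroup.zpowers (f ζ) = ⊤ := by
      apply Subgroup.eq_top_of_card_eq
      rw [Nat.card_zpowers, hordw, Nat.card_units, Nat.card_eq_fintype_card]
    intro w
    have hw : w ∈ Subgroup.zpowers (f ζ) := htop ▸ Subgroup.mem_top w
    obtain ⟨k, hk⟩ := hw
    have hk' : (f ζ) ^ k = w := hk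
    exact ⟨ζ ^ k, by rw [map_zpow, hk']⟩
  -- lift
  refine ⟨E, hEne, (QuotientGroup.lift f.ker θ (fun u hu => hker u hu)).comp
    (QuotientGroup.quotientKerEquivOfSurjective f hsurj).symm.toMonoidHom, ?_⟩
  ext u
  have h1 : (QuotientGroup.quotientKerEquivOfSurjective f hsurj).symm (f u) =
      QuotientGroup.mk u := by
    rw [MulEquiv.symm_apply_eq]
    rfl
  simp only [MonoidHom.comp_apply, MulEquiv.coe_toMonoidHom, ← hfdef, h1]
  rw [show Units.map (Algebra.norm ↥E) u = f u from rfl, h1]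
  rfl
end

section
/- Let K ⊆ L be finite fields with |K| = q and [L : K] = m ≥ 2, and let χ₀ be a character of Kˣ. Then the number of characters θ of Lˣ in general position with θ|_{Kˣ} = χ₀ is at least q^{m−1} − 1. -/
/-- The restriction of a character `θ : Lˣ →* ℂˣ` to `Kˣ`. -/
noncomputable def charRestrict (K : Type*) {L : Type*} [Field K] [Field L] [Algebra K L]
    (θ : Lˣ →* ℂˣ) : Kˣ →* ℂˣ :=
  θ.comp (Units.map (algebraMap K L : K →* L))

open Finset

namespace CGPAux

noncomputable instance (k : ℕ) [NeZero k] : Fintype (rootsOfUnity k ℂ) := Fintype.ofFinite _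

lemma pow_eq_pow_of_modEq {M : Type*} [Group M] {z : M} {n a b : ℕ}
    (hz : z ^ n = 1) (h : a ≡ b [MOD n]) : z ^ a = z ^ b :=
  pow_eq_pow_iff_modEq.mpr (Nat.ModEq.of_dvd (orderOf_dvd_of_pow_eq_one hz) h)

lemma hom_ext_of_generator {G M : Type*} [Group G] [Group M] {g : G}
    (hg : ∀ x, x ∈ Subgroup.zpowers g) {θ₁ θ₂ : G →* M} (h : θ₁ g = θ₂ g) : θ₁ = θ₂ := by
  ext x
  obtain ⟨k, rfl⟩ := Subgroup.mem_zpowers_iff.mp (hg x)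
  rw [map_zpow, map_zpow, h]

lemma exists_monoidHom_of_generator {G M : Type*} [Group G] [Finite G] [Group M] {g : G}
    (hg : ∀ x, x ∈ Subgroup.zpowers g) {z : M} (hz : z ^ orderOf g = 1) :
    ∃ θ : G →* M, θ g = z := by
  have hgp : ∀ x : G, ∃ k : ℕ, g ^ k = x := fun x =>
    (Submonoid.mem_powers_iff x g).mp (mem_powers_iff_mem_zpowers.mpr (hg x))
  choose k hk using hgp
  have key : ∀ a b : ℕ, g ^ a = g ^ b → z ^ a = z ^ b := fun a b hab =>
    pow_eq_pow_of_modEq hz (pow_eq_pow_iff_modEq.mp hab)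
  refine ⟨⟨⟨fun x => z ^ k x, ?_⟩, ?_⟩, ?_⟩
  · exact (key (k 1) 0 (by rw [hk, pow_zero])).trans (pow_zero z)
  · intro x y
    have hxy : g ^ k (x * y) = g ^ (k x + k y) := by rw [pow_add, hk, hk, hk]
    show z ^ k (x * y) = z ^ k x * z ^ k y
    rw [key _ _ hxy, pow_add]
  · exact (key (k g) 1 (by rw [hk, pow_one])).trans (pow_one z)

lemma geom_sum_mul_nat {q : ℕ} (hq : 1 ≤ q) (d : ℕ) :
    (∑ i ∈ range d, q ^ i) * (q - 1) = q ^ d - 1 := by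
  have h1 : 1 ≤ q ^ d := Nat.one_le_pow _ _ hq
  zify [hq, h1]
  exact geom_sum_mul _ _

lemma gcd_le_aux {q m d j : ℕ} (hq : 2 ≤ q) (hd : d ∣ m) (hd0 : 0 < d)
    (hj : Nat.gcd (q ^ m - 1) j = ∑ i ∈ range m, q ^ i) :
    Nat.gcd (q ^ d - 1) j ≤ (∑ i ∈ range d, q ^ i) * Nat.gcd (q - 1) (m / d) := by
  set r := ∑ i ∈ range m, q ^ i with hr_def
  set s := ∑ i ∈ range d, q ^ i with hs_def
  set k := m / d with hk_def
  have hq1 : 1 ≤ q := by omega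
  have hm_eq : m = d * k := (Nat.mul_div_cancel' hd).symm
  have hs : s * (q - 1) = q ^ d - 1 := geom_sum_mul_nat hq1 d
  have hr : r * (q - 1) = q ^ m - 1 := geom_sum_mul_nat hq1 m
  have hqd1 : 1 ≤ q ^ d := Nat.one_le_pow _ _ hq1
  have hqd2 : 2 ≤ q ^ d := by
    calc 2 ≤ q := hq
    _ = q ^ 1 := (pow_one q).symm
    _ ≤ q ^ d := Nat.pow_le_pow_right (by omega) hd0
  set e := Nat.gcd (q ^ d - 1) j with he_def
  have heD : e ∣ q ^ d - 1 := Nat.gcd_dvd_left _ _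
  have hej : e ∣ j := Nat.gcd_dvd_right _ _
  have hDn : q ^ d - 1 ∣ q ^ m - 1 := by
    have h := Nat.sub_dvd_pow_sub_pow (q ^ d) 1 k
    rwa [one_pow, ← pow_mul, ← hm_eq] at h
  have her : e ∣ r := by
    rw [← hj]
    exact Nat.dvd_gcd (heD.trans hDn) hej
  set x : ℤ := (q : ℤ) ^ d with hx_def
  have hrZ : (r : ℤ) * ((q : ℤ) - 1) = (q : ℤ) ^ m - 1 := by
    rw [hr_def]; push_cast; exact geom_sum_mul _ _
  have hsZ : (s : ℤ) * ((q : ℤ) - 1) = x - 1 := by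
    rw [hs_def, hx_def]; push_cast; exact geom_sum_mul _ _
  have hgs : (∑ i ∈ range k, x ^ i) * (x - 1) = x ^ k - 1 := geom_sum_mul x k
  have hsum : (∑ i ∈ range k, (x ^ i - 1)) = (∑ i ∈ range k, x ^ i) - (k : ℤ) := by
    rw [Finset.sum_sub_distrib, Finset.sum_const, Finset.card_range, nsmul_eq_mul, mul_one]
  obtain ⟨W, hW⟩ : (x - 1) ∣ ∑ i ∈ range k, (x ^ i - 1) :=
    Finset.dvd_sum fun i _ => by simpa using sub_dvd_pow_sub_pow x 1 i
  have hxk : x ^ k = (q : ℤ) ^ m := by rw [hx_def, ← pow_mul, ← hm_eq]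
  have k2 : ((r : ℤ) - k * s) * ((q : ℤ) - 1) = x ^ k - 1 - k * (x - 1) := by
    linear_combination hrZ - (k : ℤ) * hsZ - hxk
  have k1 : (x - 1) * ((∑ i ∈ range k, x ^ i) - (k : ℤ)) = x ^ k - 1 - k * (x - 1) := by
    linear_combination hgs
  have k3 : ((r : ℤ) - k * s) * ((q : ℤ) - 1) = (x - 1) * ((x - 1) * W) := by
    rw [k2, ← k1, ← hsum, hW]
  have k4 : ((r : ℤ) - k * s) * ((q : ℤ) - 1) = ((x - 1) * s * W) * ((q : ℤ) - 1) := by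
    linear_combination k3 - (x - 1) * W * hsZ
  have hq1Z : ((q : ℤ) - 1) ≠ 0 := by
    have h2 : (2 : ℤ) ≤ (q : ℤ) := by exact_mod_cast hq
    omega
  have k5 : (r : ℤ) - k * s = (x - 1) * s * W := mul_right_cancel₀ hq1Z k4
  have heZ : (e : ℤ) ∣ (x - 1) := by
    have h := Int.natCast_dvd_natCast.mpr heD
    rwa [Nat.cast_sub hqd1, Nat.cast_pow, Nat.cast_one, ← hx_def] at h
  have heks : e ∣ k * s := by
    have h1 : (e : ℤ) ∣ (r : ℤ) - k * s := heZ.trans ⟨s * W, by rw [k5]; ring⟩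
    have h2 : (e : ℤ) ∣ (r : ℤ) := Int.natCast_dvd_natCast.mpr her
    have h3 : (e : ℤ) ∣ (k : ℤ) * s := by
      have h4 := dvd_sub h2 h1
      simpa using h4
    exact_mod_cast h3
  have hesq : e ∣ s * (q - 1) := by rw [hs]; exact heD
  have hfin : e ∣ s * Nat.gcd (q - 1) k := by
    rw [← Nat.gcd_mul_left]
    exact Nat.dvd_gcd hesq (by rwa [mul_comm] at heks)
  have hspos : 0 < s := by
    rcases Nat.eq_zero_or_pos s with h0 | h0
    · exfalso; rw [h0, zero_mul] at hs; omega
    · exact h0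
  have hgpos : 0 < Nat.gcd (q - 1) k := Nat.gcd_pos_of_pos_left _ (by omega)
  exact Nat.le_of_dvd (Nat.mul_pos hspos hgpos) hfin

lemma final_ineq {q m : ℕ} (hq : 2 ≤ q) (hm : 2 ≤ m) :
    (∑ d ∈ m.properDivisors, (∑ i ∈ range d, q ^ i) * Nat.gcd (q - 1) (m / d))
      + (q ^ (m - 1) - 1) ≤ ∑ i ∈ range m, q ^ i := by
  have hsplit : ∑ i ∈ range m, q ^ i = (∑ i ∈ range (m - 1), q ^ i) + q ^ (m - 1) := by
    conv_lhs => rw [show m = (m - 1) + 1 by omega, Finset.sum_range_succ]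
  have hpow1 : 1 ≤ q ^ (m - 1) := Nat.one_le_pow _ _ (by omega)
  have main : (∑ d ∈ m.properDivisors, (∑ i ∈ range d, q ^ i) * Nat.gcd (q - 1) (m / d))
      ≤ (∑ i ∈ range (m - 1), q ^ i) + 1 := by
    rcases eq_or_lt_of_le hm with h2 | h3
    · -- m = 2
      rw [← h2]
      have hpd : (2 : ℕ).properDivisors = {1} := rfl
      rw [hpd, Finset.sum_singleton]
      have : (∑ i ∈ range 1, q ^ i) = 1 := by simp
      rw [this, one_mul]
      have hg2 : Nat.gcd (q - 1) (2 / 1) ≤ 2 := Nat.le_of_dvd (by omega) (Nat.gcd_dvd_right _ _)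
      omega
    · -- 3 ≤ m
      have hsub : m.properDivisors ⊆ Finset.Ico 1 (m - 1) := by
        intro d hd
        obtain ⟨hdvd, hlt⟩ := Nat.mem_properDivisors.mp hd
        have hd0 : d ≠ 0 := by
          intro h0
          rw [h0] at hdvd
          have := Nat.eq_zero_of_zero_dvd hdvd
          omega
        obtain ⟨t, ht⟩ := hdvd
        have ht2 : 2 ≤ t := by
          rcases Nat.lt_or_ge t 2 with h | h
          · interval_cases t <;> omega
          · exact h
        have h2d : 2 * d ≤ m := by
          rw [ht, mul_comm]
          exact Nat.mul_le_mul_left d ht2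
        rw [Finset.mem_Ico]
        omega
      calc (∑ d ∈ m.properDivisors, (∑ i ∈ range d, q ^ i) * Nat.gcd (q - 1) (m / d))
          ≤ ∑ d ∈ m.properDivisors, q ^ d := by
            refine Finset.sum_le_sum fun d hd => ?_
            have hgle : Nat.gcd (q - 1) (m / d) ≤ q - 1 :=
              Nat.le_of_dvd (by omega) (Nat.gcd_dvd_left _ _)
            calc (∑ i ∈ range d, q ^ i) * Nat.gcd (q - 1) (m / d)
                ≤ (∑ i ∈ range d, q ^ i) * (q - 1) := Nat.mul_le_mul_left _ hgle
              _ = q ^ d - 1 := geom_sum_mul_nat (by omega) d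
              _ ≤ q ^ d := Nat.sub_le _ _
        _ ≤ ∑ d ∈ Finset.Ico 1 (m - 1), q ^ d := Finset.sum_le_sum_of_subset hsub
        _ ≤ ∑ d ∈ range (m - 1), q ^ d := by
            refine Finset.sum_le_sum_of_subset ?_
            rw [Finset.range_eq_Ico]
            exact Finset.Ico_subset_Ico (by omega) le_rfl
        _ ≤ (∑ i ∈ range (m - 1), q ^ i) + 1 := Nat.le_succ _
  omega

end CGPAux

open CGPAux

/-- Let `K ⊆ L` be finite fields with `|K| = q` and `[L : K] = m ≥ 2`, and let `χ₀` be a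
character of `Kˣ`.  Then the number of characters `θ` of `Lˣ` in general position with
`θ|_{Kˣ} = χ₀` is at least `q ^ (m - 1) - 1`. -/
theorem card_general_position_ge
    (K L : Type*) [Field K] [Field L] [Fintype K] [Fintype L] [Algebra K L]
    (q m : ℕ) (hq : Fintype.card K = q) (hm : Module.finrank K L = m) (hm2 : 2 ≤ m)
    (χ₀ : Kˣ →* ℂˣ) :
    q ^ (m - 1) - 1 ≤
      Nat.card {θ : Lˣ →* ℂˣ // IsGeneralPosition K θ ∧ charRestrict K θ = χ₀} := by
  classical
  subst hq; subst hm
  set q := Fintype.card K with hq_def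
  set m := Module.finrank K L with hm_def
  have hq2 : 2 ≤ q := Fintype.one_lt_card
  have hcardL : Fintype.card L = q ^ m := Module.card_eq_pow_finrank
  set n := q ^ m - 1 with hn_def
  have hqm4 : 4 ≤ q ^ m := by
    calc (4:ℕ) = 2 ^ 2 := rfl
    _ ≤ q ^ 2 := Nat.pow_le_pow_left hq2 2
    _ ≤ q ^ m := Nat.pow_le_pow_right (by omega) hm2
  have hn3 : 3 ≤ n := by omega
  have hn0 : n ≠ 0 := by omega
  haveI : NeZero n := ⟨hn0⟩
  have hcardLx : Nat.card Lˣ = n := by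
    rw [Nat.card_units, Nat.card_eq_fintype_card, hcardL]
  obtain ⟨g, hg⟩ := IsCyclic.exists_generator (α := Lˣ)
  have hog : orderOf g = n := (orderOf_eq_card_of_forall_mem_zpowers hg).trans hcardLx
  obtain ⟨h, hh⟩ := IsCyclic.exists_generator (α := Kˣ)
  have hoh : orderOf h = q - 1 := by
    rw [orderOf_eq_card_of_forall_mem_zpowers hh, Nat.card_units, Nat.card_eq_fintype_card]
  set ι : Kˣ →* Lˣ := Units.map (algebraMap K L : K →* L) with hι_def
  have hinj : Function.Injective ι := Units.map_injective (algebraMap K L).injective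
  have hoih : orderOf (ι h) = q - 1 := by rw [orderOf_injective ι hinj, hoh]
  obtain ⟨j, hj⟩ : ∃ j : ℕ, g ^ j = ι h :=
    (Submonoid.mem_powers_iff _ _).mp (mem_powers_iff_mem_zpowers.mpr (hg (ι h)))
  set r := ∑ i ∈ range m, q ^ i with hr_def
  have hrq : r * (q - 1) = n := geom_sum_mul_nat (by omega) m
  have hrpos : 0 < r := by
    rcases Nat.eq_zero_or_pos r with h0 | h0
    · rw [h0, zero_mul] at hrq; omega
    · exact h0
  haveI : NeZero r := ⟨by omega⟩
  have hgcdnj : Nat.gcd n j = r := by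
    have h1 : orderOf (g ^ j) = n / Nat.gcd n j := by rw [orderOf_pow, hog]
    rw [hj, hoih] at h1
    have h2 : Nat.gcd n j ∣ n := Nat.gcd_dvd_left _ _
    have h3 : Nat.gcd n j * (n / Nat.gcd n j) = n := Nat.mul_div_cancel' h2
    rw [← h1] at h3
    exact Nat.eq_of_mul_eq_mul_right (by omega : 0 < q - 1) (by rw [h3, hrq])
  have hrj : r ∣ j := by
    have h1 : (g ^ j) ^ (q - 1) = 1 := by
      rw [hj, ← map_pow, ← hoh, pow_orderOf_eq_one, map_one]
    have h2 : n ∣ j * (q - 1) := by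
      rw [← hog]
      exact orderOf_dvd_of_pow_eq_one (by rw [pow_mul]; exact h1)
    have h3 : r * (q - 1) ∣ j * (q - 1) := by rw [hrq]; exact h2
    exact (Nat.mul_dvd_mul_iff_right (by omega : 0 < q - 1)).mp h3
  set c : ℂˣ := χ₀ h with hc_def
  have hc : c ^ (q - 1) = 1 := by rw [hc_def, ← map_pow, ← hoh, pow_orderOf_eq_one, map_one]
  set ζ : ℂ := Complex.exp (2 * Real.pi * Complex.I / n) with hζ_def
  have hζ : IsPrimitiveRoot ζ n := Complex.isPrimitiveRoot_exp n hn0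
  have hζ0 : ζ ≠ 0 := Complex.exp_ne_zero _
  set ζu : ℂˣ := Units.mk0 ζ hζ0 with hζu_def
  have hζun : ζu ^ n = 1 := by
    apply Units.ext
    rw [Units.val_pow_eq_pow_val, Units.val_one]
    exact hζ.pow_eq_one
  have hcq : c ^ n = 1 := by rw [← hrq, mul_comm, pow_mul, hc, one_pow]
  have hcn : ((c : ℂˣ) : ℂ) ^ n = 1 := by
    rw [← Units.val_pow_eq_pow_val, hcq, Units.val_one]
  obtain ⟨a, ha_lt, ha⟩ := hζ.eq_pow_of_pow_eq_one hcn
  have hζua : ζu ^ a = c := by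
    apply Units.ext
    rw [Units.val_pow_eq_pow_val]
    exact ha
  have hra : r ∣ a := by
    have h1 : ζ ^ (a * (q - 1)) = 1 := by
      rw [pow_mul, ha, ← Units.val_pow_eq_pow_val, hc, Units.val_one]
    have h2 : n ∣ a * (q - 1) := hζ.dvd_of_pow_eq_one _ h1
    have h3 : r * (q - 1) ∣ a * (q - 1) := by rw [hrq]; exact h2
    exact (Nat.mul_dvd_mul_iff_right (by omega : 0 < q - 1)).mp h3
  obtain ⟨a', ha'⟩ := hra
  have hbez : (r : ℤ) = n * Nat.gcdA n j + j * Nat.gcdB n j := by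
    rw [← hgcdnj]; exact Nat.gcd_eq_gcd_ab n j
  set z₀ : ℂˣ := ζu ^ ((a' : ℤ) * Nat.gcdB n j) with hz₀_def
  have hz₀n : z₀ ^ n = 1 := by
    rw [hz₀_def, ← zpow_natCast, ← zpow_mul, mul_comm, zpow_mul, zpow_natCast, hζun, one_zpow]
  have hz₀j : z₀ ^ j = c := by
    have key : ((a' : ℤ) * Nat.gcdB n j) * j = (a : ℤ) + n * (-(a' * Nat.gcdA n j)) := by
      have haZ : (a : ℤ) = r * a' := by exact_mod_cast ha'
      rw [haZ]
      linear_combination (-(a' : ℤ)) * hbez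
    rw [hz₀_def, ← zpow_natCast, ← zpow_mul, key, zpow_add, zpow_natCast, hζua, zpow_mul,
      zpow_natCast, hζun, one_zpow, mul_one]
  have hextend : ∀ z : ℂˣ, z ^ n = 1 → ∃ θ : Lˣ →* ℂˣ, θ g = z := fun z hz =>
    exists_monoidHom_of_generator hg (by rw [hog]; exact hz)
  choose θf hθf using hextend
  set Ω : Finset ℂˣ := Finset.image (fun w : rootsOfUnity n ℂ => (w : ℂˣ)) Finset.univ with hΩ_def
  have hΩmem : ∀ z : ℂˣ, z ∈ Ω ↔ z ^ n = 1 := by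
    intro z
    simp only [hΩ_def, Finset.mem_image, Finset.mem_univ, true_and]
    constructor
    · rintro ⟨w, rfl⟩; exact (mem_rootsOfUnity n _).mp w.2
    · intro hz; exact ⟨⟨z, (mem_rootsOfUnity n z).mpr hz⟩, rfl⟩
  set T : Finset ℂˣ := Ω.filter (fun z => z ^ j = c) with hT_def
  set Bad : ℕ → Finset ℂˣ := fun d => T.filter (fun z => z ^ (q ^ d - 1) = 1) with hBad_def
  set Gs : Finset ℂˣ := T \ (Nat.properDivisors m).biUnion Bad with hGs_def
  have hTcard : r ≤ T.card := by
    have hrn : r ∣ n := ⟨q - 1, hrq.symm⟩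
    have hmemT : ∀ w : rootsOfUnity r ℂ, z₀ * (w : ℂˣ) ∈ T := by
      intro w
      have hwr : (w : ℂˣ) ^ r = 1 := (mem_rootsOfUnity r _).mp w.2
      have hwn : (w : ℂˣ) ^ n = 1 := by
        obtain ⟨t, ht⟩ := hrn; rw [ht, pow_mul, hwr, one_pow]
      have hwj : (w : ℂˣ) ^ j = 1 := by
        obtain ⟨t, ht⟩ := hrj; rw [ht, pow_mul, hwr, one_pow]
      rw [hT_def, Finset.mem_filter, hΩmem]
      constructor
      · rw [mul_pow, hz₀n, hwn, one_mul]
      · rw [mul_pow, hz₀j, hwj, mul_one]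
    have hfinj : Function.Injective (fun w : rootsOfUnity r ℂ =>
        (⟨z₀ * (w : ℂˣ), hmemT w⟩ : {z : ℂˣ // z ∈ T})) := by
      intro w₁ w₂ hw
      apply Subtype.ext
      have h1 : z₀ * (w₁ : ℂˣ) = z₀ * (w₂ : ℂˣ) := congrArg Subtype.val hw
      exact mul_left_cancel h1
    calc r = Fintype.card (rootsOfUnity r ℂ) := (Nat.card_eq_fintype_card.symm.trans (Complex.card_rootsOfUnity r)).symm
      _ ≤ Fintype.card {z : ℂˣ // z ∈ T} := Fintype.card_le_of_injective _ hfinj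
      _ = T.card := Fintype.card_coe T
  have hBadcard : ∀ d ∈ Nat.properDivisors m,
      (Bad d).card ≤ (∑ i ∈ range d, q ^ i) * Nat.gcd (q - 1) (m / d) := by
    intro d hd
    obtain ⟨hdvd, hlt⟩ := Nat.mem_properDivisors.mp hd
    have hd0 : 0 < d := by
      rcases Nat.eq_zero_or_pos d with h0 | h0
      · exfalso; rw [h0] at hdvd; have := Nat.eq_zero_of_zero_dvd hdvd; omega
      · exact h0
    have hqd2 : 2 ≤ q ^ d := by
      calc 2 ≤ q := hq2
      _ = q ^ 1 := (pow_one q).symm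
      _ ≤ q ^ d := Nat.pow_le_pow_right (by omega) hd0
    set e := Nat.gcd (q ^ d - 1) j with he_def
    have hepos : 0 < e := Nat.gcd_pos_of_pos_left _ (by omega)
    haveI : NeZero e := ⟨by omega⟩
    have hmemBad : ∀ z ∈ Bad d, z ^ n = 1 ∧ z ^ j = c ∧ z ^ (q ^ d - 1) = 1 := by
      intro z hz
      rw [hBad_def] at hz
      simp only [Finset.mem_filter] at hz
      rw [hT_def] at hz
      simp only [Finset.mem_filter, hΩmem] at hz
      tauto
    have hecard : (Bad d).card ≤ e := by
      rcases (Bad d).eq_empty_or_nonempty with hemp | ⟨z₁, hz₁⟩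
      · rw [hemp, Finset.card_empty]; omega
      · obtain ⟨hz₁n, hz₁j, hz₁D⟩ := hmemBad z₁ hz₁
        have hmemf : ∀ z : {z : ℂˣ // z ∈ Bad d}, ((z : ℂˣ) * z₁⁻¹) ∈ rootsOfUnity e ℂ := by
          intro z
          obtain ⟨hzn, hzj, hzD⟩ := hmemBad z z.2
          rw [mem_rootsOfUnity]
          have h1 : ((z : ℂˣ) * z₁⁻¹) ^ (q ^ d - 1) = 1 := by
            rw [mul_pow, hzD, inv_pow, hz₁D, inv_one, mul_one]
          have h2 : ((z : ℂˣ) * z₁⁻¹) ^ j = 1 := by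
            rw [mul_pow, inv_pow, hzj, hz₁j, mul_inv_cancel]
          exact orderOf_dvd_iff_pow_eq_one.mp
            (Nat.dvd_gcd (orderOf_dvd_of_pow_eq_one h1) (orderOf_dvd_of_pow_eq_one h2))
        have hfinj : Function.Injective (fun z : {z : ℂˣ // z ∈ Bad d} =>
            (⟨(z : ℂˣ) * z₁⁻¹, hmemf z⟩ : rootsOfUnity e ℂ)) := by
          intro w₁ w₂ hw
          apply Subtype.ext
          have h1 : (w₁ : ℂˣ) * z₁⁻¹ = (w₂ : ℂˣ) * z₁⁻¹ := congrArg Subtype.val hw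
          exact mul_right_cancel h1
        calc (Bad d).card = Fintype.card {z : ℂˣ // z ∈ Bad d} := (Fintype.card_coe _).symm
          _ ≤ Fintype.card (rootsOfUnity e ℂ) := Fintype.card_le_of_injective _ hfinj
          _ = e := Nat.card_eq_fintype_card.symm.trans (Complex.card_rootsOfUnity e)
    refine hecard.trans ?_
    exact gcd_le_aux hq2 hdvd hd0 (by rw [← hn_def, hgcdnj])
  have hGscard : q ^ (m - 1) - 1 ≤ Gs.card := by
    have h1 : ((Nat.properDivisors m).biUnion Bad).card ≤
        ∑ d ∈ Nat.properDivisors m, (∑ i ∈ range d, q ^ i) * Nat.gcd (q - 1) (m / d) :=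
      (Finset.card_biUnion_le).trans (Finset.sum_le_sum hBadcard)
    have h2 : T.card - ((Nat.properDivisors m).biUnion Bad).card ≤ Gs.card :=
      Finset.le_card_sdiff _ _
    have h3 := final_ineq hq2 hm2
    rw [← hr_def] at h3
    omega
  have hGsmem : ∀ z ∈ Gs, (z ^ n = 1 ∧ z ^ j = c) ∧
      ∀ d ∈ Nat.properDivisors m, z ^ (q ^ d - 1) ≠ 1 := by
    intro z hz
    rw [hGs_def, Finset.mem_sdiff] at hz
    obtain ⟨hzT, hzB⟩ := hz
    have h1 : z ^ n = 1 ∧ z ^ j = c := by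
      rw [hT_def] at hzT
      simp only [Finset.mem_filter, hΩmem] at hzT
      exact hzT
    refine ⟨h1, fun d hd hcon => hzB ?_⟩
    rw [Finset.mem_biUnion]
    refine ⟨d, hd, ?_⟩
    rw [hBad_def]
    exact Finset.mem_filter.mpr ⟨hzT, hcon⟩
  have hgn : g ^ n = 1 := by rw [← hog]; exact pow_orderOf_eq_one g
  haveI hfinhom : Finite (Lˣ →* ℂˣ) :=
    Finite.of_injective
      (fun θ : Lˣ →* ℂˣ => (⟨θ g, by rw [mem_rootsOfUnity, ← map_pow, hgn, map_one]⟩ :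
        rootsOfUnity n ℂ))
      (fun θ₁ θ₂ hθ => hom_ext_of_generator hg (congrArg Subtype.val hθ))
  have hFex : ∀ z : {z : ℂˣ // z ∈ Gs}, ∃ θ : Lˣ →* ℂˣ,
      θ g = (z : ℂˣ) ∧ IsGeneralPosition K θ ∧ charRestrict K θ = χ₀ := by
    rintro ⟨z, hz⟩
    obtain ⟨⟨hzn, hzj⟩, hznb⟩ := hGsmem z hz
    refine ⟨θf z hzn, hθf z hzn, ?_, ?_⟩
    · rintro ⟨E, hE, θ', hfac⟩
      set d := Module.finrank K ↥E with hd_def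
      have hdm : d * Module.finrank ↥E L = m := by
        rw [hd_def, Module.finrank_mul_finrank, hm_def]
      have htne : Module.finrank ↥E L ≠ 1 := by
        intro h1
        apply hE
        have hbt : (⊥ : Subalgebra ↥E L) = ⊤ := Subalgebra.bot_eq_top_of_finrank_eq_one h1
        rw [eq_top_iff]
        intro x _
        have hx : x ∈ (⊥ : Subalgebra ↥E L) := by rw [hbt]; trivial
        obtain ⟨y, hy⟩ := Algebra.mem_bot.mp hx
        rw [← hy]
        exact y.2
      have hd_pd : d ∈ Nat.properDivisors m := by
        rw [Nat.mem_properDivisors]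
        constructor
        · exact ⟨_, hdm.symm⟩
        · have ht0 : Module.finrank ↥E L ≠ 0 := by
            intro h0; rw [h0, mul_zero] at hdm; omega
          have ht2 : 2 ≤ Module.finrank ↥E L := by omega
          have hd0 : d ≠ 0 := by intro h0; rw [h0, zero_mul] at hdm; omega
          calc d < d * 2 := by omega
          _ ≤ d * Module.finrank ↥E L := Nat.mul_le_mul_left d ht2
          _ = m := hdm
      apply hznb d hd_pd
      haveI : Fintype ↥E := Fintype.ofFinite ↥E
      have hcardE : Nat.card (↥E)ˣ = q ^ d - 1 := by
        rw [Nat.card_units, Nat.card_eq_fintype_card,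
          Module.card_eq_pow_finrank (K := K) (V := ↥E), hd_def]
      have hpow : (Units.map (Algebra.norm (↥E) : L →* ↥E) g) ^ (q ^ d - 1) = 1 := by
        rw [← hcardE]; exact pow_card_eq_one'
      calc z ^ (q ^ d - 1) = (θf z hzn g) ^ (q ^ d - 1) := by rw [hθf z hzn]
        _ = θ' ((Units.map (Algebra.norm (↥E) : L →* ↥E) g) ^ (q ^ d - 1)) := by
            rw [hfac, MonoidHom.comp_apply, ← map_pow]
        _ = 1 := by rw [hpow, map_one]
    · apply hom_ext_of_generator hh
      show charRestrict K (θf z hzn) h = χ₀ h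
      have hcr : charRestrict K (θf z hzn) h = θf z hzn (ι h) := rfl
      rw [hcr, ← hj, map_pow, hθf z hzn, hzj]
  choose Ff hFg hFgp hFr using hFex
  have hinjF : Function.Injective (fun z : {z : ℂˣ // z ∈ Gs} =>
      (⟨Ff z, hFgp z, hFr z⟩ :
        {θ : Lˣ →* ℂˣ // IsGeneralPosition K θ ∧ charRestrict K θ = χ₀})) := by
    intro z₁ z₂ hz
    have h1 : Ff z₁ = Ff z₂ := congrArg Subtype.val hz
    apply Subtype.ext
    rw [← hFg z₁, ← hFg z₂, h1]
  have hcount : Nat.card {z : ℂˣ // z ∈ Gs} ≤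
      Nat.card {θ : Lˣ →* ℂˣ // IsGeneralPosition K θ ∧ charRestrict K θ = χ₀} :=
    Nat.card_le_card_of_injective _ hinjF
  calc q ^ (m - 1) - 1 ≤ Gs.card := hGscard
    _ = Nat.card {z : ℂˣ // z ∈ Gs} := (Nat.card_eq_finsetCard Gs).symm
    _ ≤ _ := hcount
end

section
/- Let K ⊆ L be finite fields with |K| = q and [L : K] = m ≥ 2, let χ₀ be a character of Kˣ, and let B ≥ 1. Let S be the set of characters θ of Lˣ in general position with θ|_{Kˣ} = χ₀ and [ℚ(θ) : ℚ] ≤ B. Then S is stable under the Frobenius action θ ↦ θ^{(q)} (where θ^{(q)}(y) = θ(y^q)), every orbit of this action on S has exactly m elements, and consequently the number of orbits is at most f(B)/m, where f(B) is the (finite) number of complex roots of unity ζ with [ℚ(ζ) : ℚ] ≤ B. -/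
/-- `ℚ(θ)`: the subfield of `ℂ` generated by the values of a character `θ : G →* ℂˣ`. -/
noncomputable def charField {G : Type*} [Group G] (θ : G →* ℂˣ) : IntermediateField ℚ ℂ :=
  IntermediateField.adjoin ℚ (Set.range fun g => ((θ g : ℂˣ) : ℂ))

/-- `[ℚ(θ) : ℚ]`: the degree over `ℚ` of the subfield of `ℂ` generated by the values
of a character `θ`. -/
noncomputable def charDegree {G : Type*} [Group G] (θ : G →* ℂˣ) : ℕ :=
  Module.finrank ℚ ↥(charField θ)

/-- `f(B)`: the number of complex roots of unity `ζ` with `[ℚ(ζ) : ℚ] ≤ B`. -/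
noncomputable def rootsOfUnityCount (B : ℕ) : ℕ :=
  Nat.card {ζ : ℂ // (∃ n : ℕ, 1 ≤ n ∧ ζ ^ n = 1) ∧
    Module.finrank ℚ ↥(IntermediateField.adjoin ℚ {ζ}) ≤ B}

/-- The Frobenius action on characters of `Lˣ`: `θ ↦ θ^{(q)}` where `θ^{(q)} y = θ (y ^ q)`. -/
noncomputable def frobAct {L : Type*} [Field L] (q : ℕ) (θ : Lˣ →* ℂˣ) : Lˣ →* ℂˣ :=
  θ.comp (powMonoidHom q)


section AuxLemmas
open Polynomial


lemma aux_card_rootsOfUnity {L : Type*} [Field L] [Finite L] {n : ℕ} (hn : 0 < n)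
    (hd : n ∣ Nat.card Lˣ) : Nat.card (rootsOfUnity n L) = n := by
  classical
  cases nonempty_fintype L
  obtain ⟨g, hg⟩ := IsCyclic.exists_generator (α := Lˣ)
  have hog : orderOf g = Nat.card Lˣ := orderOf_eq_card_of_forall_mem_zpowers hg
  obtain ⟨t, ht⟩ := hd
  have hcpos : 0 < Nat.card Lˣ := Nat.card_pos
  have ht0 : 0 < t := by
    rcases Nat.eq_zero_or_pos t with h | h
    · rw [h, mul_zero] at ht; omega
    · exact h
  have hot : orderOf (g ^ t) = n := by
    rw [orderOf_pow, hog, ht]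
    have hdvd : t ∣ n * t := ⟨n, by ring⟩
    rw [Nat.gcd_comm, Nat.gcd_eq_left hdvd, Nat.mul_div_cancel _ ht0]
  haveI : NeZero n := ⟨hn.ne'⟩
  have hprim : IsPrimitiveRoot (g ^ t) n := hot ▸ IsPrimitiveRoot.orderOf (g ^ t)
  exact hprim.card_rootsOfUnity'

lemma aux_exists_pow_eq {G : Type*} [Group G] [Finite G] [IsCyclic G] {c k : ℕ}
    (h : c * k = Nat.card G) {u : G} (hu : u ^ c = 1) : ∃ v : G, v ^ k = u := by
  obtain ⟨g, hg⟩ := IsCyclic.exists_generator (α := G)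
  have hog : orderOf g = Nat.card G := orderOf_eq_card_of_forall_mem_zpowers hg
  obtain ⟨a, ha⟩ := (mem_powers_iff_mem_zpowers.2 (hg u) : u ∈ Submonoid.powers g)
  dsimp only at ha
  have hc : 0 < c := by
    rcases Nat.eq_zero_or_pos c with h0 | h0
    · rw [h0, zero_mul] at h; have := Nat.card_pos (α := G); omega
    · exact h0
  have h1 : g ^ (a * c) = 1 := by rw [pow_mul, ha, hu]
  have h2 : c * k ∣ a * c := by rw [h, ← hog]; exact orderOf_dvd_of_pow_eq_one h1
  have h3 : k ∣ a := by
    rw [mul_comm a c] at h2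
    exact (mul_dvd_mul_iff_left (by exact_mod_cast hc.ne' : (c : ℕ) ≠ 0)).mp h2
  obtain ⟨s, rfl⟩ := h3
  exact ⟨g ^ s, by rw [← pow_mul, mul_comm s k, ← ha]⟩

lemma aux_card_le_of_forall_pow_eq {L : Type*} [Field L] [Fintype L] {n : ℕ} (hn : 2 ≤ n)
    (h : ∀ x : L, x ^ n = x) : Fintype.card L ≤ n := by
  classical
  set P : L[X] := X ^ n - X with hP
  have hPd : P.natDegree = n := by
    rw [hP]
    have h1 : (X : L[X]).natDegree < (X ^ n : L[X]).natDegree := by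
      rw [natDegree_X, natDegree_X_pow]; omega
    rw [natDegree_sub_eq_left_of_natDegree_lt h1, natDegree_X_pow]
  have hP0 : P ≠ 0 := fun h0 => by simp [h0] at hPd; omega
  have hroots : ∀ x : L, x ∈ P.roots.toFinset := by
    intro x
    rw [Multiset.mem_toFinset, mem_roots hP0]
    simp [hP, IsRoot, h x, sub_self]
  calc Fintype.card L = Finset.univ.card (α := L) := rfl
    _ ≤ P.roots.toFinset.card := Finset.card_le_card (fun x _ => hroots x)
    _ ≤ Multiset.card P.roots := Multiset.toFinset_card_le _
    _ ≤ P.natDegree := P.card_roots'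
    _ = n := hPd

/-- Norm formula for finite fields: `N_{L/E}(x) = x ^ (1 + Q + ... + Q^(r-1))`. -/
lemma aux_norm_formula (E L : Type*) [Field E] [Field L] [Fintype E] [Fintype L] [Algebra E L]
    (x : L) : algebraMap E L (Algebra.norm E x) =
      x ^ (∑ j ∈ Finset.range (Module.finrank E L), (Fintype.card E) ^ j) := by
  classical
  set Q := Fintype.card E with hQdef
  set r := Module.finrank E L with hrdef
  set p := ringChar E with hpdef
  haveI : CharP E p := ringChar.charP E
  obtain ⟨s, hp, hQ⟩ := FiniteField.card E p
  haveI : CharP L p := charP_of_injective_algebraMap (algebraMap E L).injective p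
  haveI := Fact.mk hp
  -- Frobenius as an E-algebra automorphism of L
  let φ₀ : L →ₐ[E] L :=
    { toRingHom := iterateFrobenius L p s
      commutes' := fun y => by
        rw [RingHom.toMonoidHom_eq_coe]
        show iterateFrobenius L p s (algebraMap E L y) = algebraMap E L y
        rw [iterateFrobenius_def, ← map_pow, ← hQ, FiniteField.pow_card] }
  have hbij : Function.Bijective φ₀ :=
    (Finite.injective_iff_bijective).mp (iterateFrobenius L p s).injective
  let φ : L ≃ₐ[E] L := AlgEquiv.ofBijective φ₀ hbij
  have hφ : ∀ y : L, φ y = y ^ Q := fun y => by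
    show iterateFrobenius L p s y = y ^ Q
    rw [iterateFrobenius_def, hQdef, hQ]
  have hφj : ∀ (j : ℕ) (y : L), (φ ^ j) y = y ^ Q ^ j := by
    intro j
    induction j with
    | zero => intro y; simp
    | succ j ih =>
      intro y
      rw [pow_succ', pow_succ']
      show φ ((φ ^ j) y) = y ^ (Q * Q ^ j)
      rw [ih y, hφ, ← pow_mul, mul_comm (Q ^ j) Q]
  have hQ2 : 2 ≤ Q := Fintype.one_lt_card
  have hcardL : Fintype.card L = Q ^ r := by
    rw [Module.card_fintype (Module.finBasis E L), Fintype.card_fin]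
  have hr0 : 0 < r := Module.finrank_pos
  have hcard : Fintype.card (L ≃ₐ[E] L) = r := by
    rw [← Nat.card_eq_fintype_card]; exact IsGalois.card_aut_eq_finrank E L
  have horder : r ≤ orderOf φ := by
    by_contra hlt
    push_neg at hlt
    have ho0 : 0 < orderOf φ := orderOf_pos φ
    have h1 : ∀ y : L, y ^ Q ^ orderOf φ = y := by
      intro y
      have := hφj (orderOf φ) y
      rw [pow_orderOf_eq_one φ] at this
      simpa using this.symm
    have h2 : Fintype.card L ≤ Q ^ orderOf φ :=
      aux_card_le_of_forall_pow_eq (by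
        calc 2 ≤ Q := hQ2
        _ = Q ^ 1 := (pow_one Q).symm
        _ ≤ Q ^ orderOf φ := Nat.pow_le_pow_right (by omega) ho0) h1
    rw [hcardL] at h2
    exact absurd h2 (by
      have := Nat.pow_lt_pow_right (show 1 < Q by omega) hlt
      omega)
  have ho : orderOf φ = r := le_antisymm
    (Nat.le_of_dvd hr0 (hcard ▸ orderOf_dvd_card)) horder
  have hinj : Function.Injective (fun j : Fin r => φ ^ (j : ℕ)) := by
    intro i j hij
    have := pow_injOn_Iio_orderOf (x := φ) (ho.symm ▸ i.isLt) (ho.symm ▸ j.isLt) hij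
    exact Fin.ext this
  have hbij2 : Function.Bijective (fun j : Fin r => φ ^ (j : ℕ)) :=
    (Fintype.bijective_iff_injective_and_card _).mpr ⟨hinj, by rw [Fintype.card_fin, hcard]⟩
  calc algebraMap E L (Algebra.norm E x) = ∏ σ : L ≃ₐ[E] L, σ x :=
        Algebra.norm_eq_prod_automorphisms E x
    _ = ∏ j : Fin r, (φ ^ (j : ℕ)) x := (Fintype.prod_bijective _ hbij2 _ _ (fun j => rfl)).symm
    _ = ∏ j : Fin r, x ^ Q ^ (j : ℕ) := by simp only [hφj]
    _ = x ^ (∑ j ∈ Finset.range r, Q ^ j) := by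
        rw [Finset.prod_pow_eq_pow_sum]
        rw [Fin.sum_univ_eq_sum_range]

lemma aux_geom_sum (Q r : ℕ) (hQ : 1 ≤ Q) :
    (∑ j ∈ Finset.range r, Q ^ j) * (Q - 1) = Q ^ r - 1 := by
  have h1 : (1:ℕ) ≤ Q ^ r := Nat.one_le_pow _ _ hQ
  have := geom_sum_mul (Q : ℤ) r
  have hcast : ((∑ j ∈ Finset.range r, Q ^ j : ℕ) : ℤ) * ((Q : ℤ) - 1) = (Q:ℤ)^r - 1 := by
    push_cast
    exact this
  have : ((∑ j ∈ Finset.range r, Q ^ j) * (Q - 1) : ℕ) = ((Q ^ r - 1 : ℕ) : ℤ) := by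
    push_cast [Nat.cast_sub hQ, Nat.cast_sub h1]
    convert hcast using 2
    push_cast
    ring
  exact_mod_cast this

section Norm
variable (E L : Type*) [Field E] [Field L] [Fintype E] [Fintype L] [Algebra E L]

lemma aux_norm_ker_iff (u : Lˣ) :
    Units.map (Algebra.norm E : L →* E) u = 1 ↔
      u ^ (∑ j ∈ Finset.range (Module.finrank E L), (Fintype.card E) ^ j) = 1 := by
  rw [Units.ext_iff, Units.ext_iff]
  push_cast
  rw [show ((Units.map (Algebra.norm E : L →* E) u : E) : E) = Algebra.norm E (u : L) from rfl]
  constructor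
  · intro h
    have := aux_norm_formula E L (u : L)
    rw [h, map_one] at this
    exact this.symm
  · intro h
    have := aux_norm_formula E L (u : L)
    rw [h] at this
    exact (algebraMap E L).injective (by rw [this, map_one])

lemma aux_norm_surjective : Function.Surjective (Units.map (Algebra.norm E : L →* E)) := by
  classical
  set ν := Units.map (Algebra.norm E : L →* E) with hν
  set Q := Fintype.card E with hQdef
  set r := Module.finrank E L with hrdef
  set c := ∑ j ∈ Finset.range r, Q ^ j with hcdef
  have hQ2 : 2 ≤ Q := Fintype.one_lt_card
  have hcmul : c * (Q - 1) = Q ^ r - 1 := aux_geom_sum Q r (by omega)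
  have hr0 : 0 < r := Module.finrank_pos
  have hc0 : 0 < c := by
    have : Q ^ 0 ≤ c := Finset.single_le_sum (f := fun j => Q ^ j) (fun _ _ => Nat.zero_le _)
      (Finset.mem_range.mpr hr0)
    exact lt_of_lt_of_le Nat.one_pos (by simpa using this)
  have hcardL : Fintype.card L = Q ^ r := by
    rw [Module.card_fintype (Module.finBasis E L), Fintype.card_fin]
  have hcardLu : Nat.card Lˣ = Q ^ r - 1 := by
    rw [Nat.card_eq_fintype_card, Fintype.card_units, hcardL]
  have hker : ν.ker = rootsOfUnity c L := by
    ext u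
    rw [MonoidHom.mem_ker, mem_rootsOfUnity]
    exact aux_norm_ker_iff E L u
  have hkercard : Nat.card ν.ker = c := by
    rw [hker]
    exact aux_card_rootsOfUnity hc0 (by rw [hcardLu, ← hcmul]; exact ⟨Q - 1, rfl⟩)
  have hquot : Nat.card (Lˣ ⧸ ν.ker) = Nat.card ν.range :=
    Nat.card_congr (QuotientGroup.quotientKerEquivRange ν).toEquiv
  have htot : Nat.card Lˣ = Nat.card ν.range * c := by
    rw [Subgroup.card_eq_card_quotient_mul_card_subgroup ν.ker, hquot, hkercard]
  have hEu : Nat.card Eˣ = Q - 1 := by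
    rw [Nat.card_eq_fintype_card, Fintype.card_units]
  have hrange : Nat.card ν.range = Q - 1 := by
    have h1 : Nat.card ν.range * c = (Q - 1) * c := by
      rw [← htot, hcardLu, ← hcmul, mul_comm]
    exact Nat.eq_of_mul_eq_mul_right hc0 h1
  have : ν.range = ⊤ := Subgroup.eq_top_of_card_eq _ (by rw [hrange, hEu])
  exact MonoidHom.range_eq_top.mp this

end Norm

/-- If a character of `Lˣ` is fixed by the `q^d`-power Frobenius with `d` a proper divisor
of `m`, then it factors through the norm map of a proper intermediate field. -/
lemma aux_exists_factorization (K L : Type*) [Field K] [Field L] [Fintype K] [Fintype L]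
    [Algebra K L] {d : ℕ} (hd : d ∣ Module.finrank K L) (hd0 : 0 < d)
    (hdm : d < Module.finrank K L) (θ : Lˣ →* ℂˣ)
    (hfix : θ.comp (powMonoidHom ((Fintype.card K) ^ d)) = θ) :
    ∃ (E : IntermediateField K L) (_ : E ≠ ⊤) (θ' : (↥E)ˣ →* ℂˣ),
      θ = θ'.comp (Units.map (Algebra.norm (↥E) : L →* ↥E)) := by
  classical
  set q := Fintype.card K with hqdef
  set m := Module.finrank K L with hmdef
  set p := ringChar K with hpdef
  haveI : CharP K p := ringChar.charP K
  obtain ⟨s, hp, hqs⟩ := FiniteField.card K p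
  haveI : CharP L p := charP_of_injective_algebraMap (algebraMap K L).injective p
  haveI := Fact.mk hp
  haveI : ExpChar L p := ExpChar.prime hp
  have hq2 : 2 ≤ q := Fintype.one_lt_card
  set n := q ^ d - 1 with hndef
  have hqd2 : 2 ≤ q ^ d := by
    calc 2 = 2 ^ 1 := rfl
    _ ≤ q ^ d := Nat.pow_le_pow_left hq2 1 |>.trans (Nat.pow_le_pow_right (by omega) hd0)
  have hn0 : 0 < n := by omega
  have hn1 : n + 1 = q ^ d := by omega
  set ψ := iterateFrobenius L p (s * d) with hψdef
  have hψ : ∀ x : L, x ^ q ^ d = ψ x := by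
    intro x
    rw [hψdef, iterateFrobenius_def, pow_mul, ← hqs]
  -- the subfield of elements fixed by `x ↦ x^(q^d)`
  set E0 : Subfield L :=
    { carrier := {x : L | x ^ q ^ d = x}
      mul_mem' := fun {a b} ha hb => by
        simp only [Set.mem_setOf_eq, hψ, map_mul] at *
        rw [ha, hb]
      one_mem' := by simp only [Set.mem_setOf_eq, one_pow]
      add_mem' := fun {a b} ha hb => by
        simp only [Set.mem_setOf_eq, hψ, map_add] at *
        rw [ha, hb]
      zero_mem' := by simp only [Set.mem_setOf_eq]; exact zero_pow (by omega)
      neg_mem' := fun {a} ha => by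
        simp only [Set.mem_setOf_eq, hψ, map_neg] at *
        rw [ha]
      inv_mem' := fun a ha => by
        simp only [Set.mem_setOf_eq, inv_pow] at *
        rw [ha] } with hE0def
  have hE0mem : ∀ x : L, x ∈ E0 ↔ x ^ q ^ d = x := fun x => Iff.rfl
  have halg : ∀ x : K, algebraMap K L x ∈ E0 := by
    intro x
    rw [hE0mem, ← map_pow, FiniteField.pow_card_pow]
  set E : IntermediateField K L := E0.toIntermediateField halg with hEdef
  haveI : Fintype ↥E := Fintype.ofFinite ↥E
  have hEmem : ∀ x : L, x ∈ E ↔ x ^ q ^ d = x := fun x => Iff.rfl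
  -- every unit of E has n-th power one
  have hEunit : ∀ u : (↥E)ˣ, u ^ n = 1 := by
    intro u
    set x : L := ((u : ↥E) : L) with hxdef
    have hx : x ^ q ^ d = x := (u : ↥E).2
    have hx0 : x ≠ 0 := fun h0 =>
      Units.ne_zero u (Subtype.coe_injective (by
        show ((u : ↥E) : L) = ((0 : ↥E) : L)
        rw [← hxdef, h0, ZeroMemClass.coe_zero]))
    have hxn : x ^ n = 1 := by
      have h1 : x ^ n * x = 1 * x := by
        rw [one_mul, ← pow_succ, hn1]
        exact hx
      exact mul_right_cancel₀ hx0 h1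
    ext
    push_cast
    exact hxn
  -- card Eˣ divides n
  have hEcyc : IsCyclic (↥E)ˣ := inferInstance
  have hdvd1 : Nat.card (↥E)ˣ ∣ n := by
    obtain ⟨gE, hgE⟩ := hEcyc.exists_generator
    rw [← orderOf_eq_card_of_forall_mem_zpowers hgE]
    exact orderOf_dvd_of_pow_eq_one (hEunit gE)
  -- q^d ≤ card E
  have hcardL : Fintype.card L = q ^ m := by
    rw [Module.card_fintype (Module.finBasis K L), Fintype.card_fin]
  have hdvdn : n ∣ Nat.card Lˣ := by
    rw [Nat.card_eq_fintype_card, Fintype.card_units, hcardL]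
    obtain ⟨t, ht⟩ := hd
    have h1 := Nat.sub_dvd_pow_sub_pow (q ^ d) 1 t
    rw [one_pow, ← pow_mul, ← ht] at h1
    exact h1
  have hru : Nat.card (rootsOfUnity n L) = n := aux_card_rootsOfUnity hn0 hdvdn
  have hle : q ^ d ≤ Fintype.card ↥E := by
    have hinj : Function.Injective (fun y : Option (rootsOfUnity n L) =>
        (y.elim (0 : ↥E) (fun z => ⟨((z : Lˣ) : L), by
          rw [hEmem]
          have hz : ((z : Lˣ) : L) ^ n = 1 := by
            have h := (mem_rootsOfUnity n (z : Lˣ)).mp z.2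
            have h2 := congrArg Units.val h
            simpa using h2
          calc ((z : Lˣ) : L) ^ q ^ d = ((z : Lˣ) : L) ^ n * ((z : Lˣ) : L) := by
                rw [← pow_succ, hn1]
            _ = ((z : Lˣ) : L) := by rw [hz, one_mul]⟩))) := by
      rintro (_ | y) (_ | z) hyz
      · rfl
      · exfalso
        simp only [Option.elim] at hyz
        exact Units.ne_zero (z : Lˣ) (by
          have := congrArg (Subtype.val) hyz
          exact (this.symm : ((z : Lˣ) : L) = 0))
      · exfalso
        simp only [Option.elim] at hyz
        exact Units.ne_zero (y : Lˣ) (by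
          have := congrArg (Subtype.val) hyz
          exact this)
      · simp only [Option.elim, Subtype.mk_eq_mk] at hyz
        congr 1
        exact Subtype.coe_injective (Units.ext hyz)
    have := Fintype.card_le_of_injective _ hinj
    rwa [Fintype.card_option, ← Nat.card_eq_fintype_card (α := rootsOfUnity n L), hru,
      hndef, Nat.sub_add_cancel (by omega)] at this
  have hcardE : Fintype.card ↥E = q ^ d := by
    have h1 : Nat.card (↥E)ˣ = Fintype.card ↥E - 1 := by
      rw [Nat.card_eq_fintype_card, Fintype.card_units]
    have h2 : Fintype.card ↥E - 1 ≤ n := Nat.le_of_dvd hn0 (h1 ▸ hdvd1)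
    have h3 : 0 < Fintype.card ↥E := Fintype.card_pos
    omega
  -- E is proper
  have hEne : E ≠ ⊤ := by
    intro htop
    have : Fintype.card ↥E = Fintype.card L := by
      have e : ↥E ≃ L :=
        (IntermediateField.equivOfEq htop).toEquiv.trans IntermediateField.topEquiv.toEquiv
      exact Fintype.card_congr e
    rw [hcardE, hcardL] at this
    have := Nat.pow_lt_pow_right (show 1 < q by omega) hdm
    omega
  -- the norm map and its kernel
  set ν := Units.map (Algebra.norm (↥E) : L →* ↥E) with hνdef
  set c := ∑ j ∈ Finset.range (Module.finrank ↥E L), (Fintype.card ↥E) ^ j with hcdef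
  have hsurj : Function.Surjective ν := aux_norm_surjective (↥E) L
  have hcn : c * n = Nat.card Lˣ := by
    have h1 : c * (Fintype.card ↥E - 1) = Fintype.card ↥E ^ Module.finrank ↥E L - 1 :=
      aux_geom_sum _ _ (by rw [hcardE]; exact Nat.one_le_pow _ _ (by omega))
    have h2 : Fintype.card ↥E ^ Module.finrank ↥E L = Fintype.card L := by
      rw [Module.card_fintype (Module.finBasis ↥E L), Fintype.card_fin]
    rw [Nat.card_eq_fintype_card, Fintype.card_units, ← h2, ← h1, hcardE]
  have hker : ν.ker ≤ θ.ker := by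
    intro u hu
    rw [MonoidHom.mem_ker] at hu ⊢
    have huc : u ^ c = 1 := (aux_norm_ker_iff (↥E) L u).mp hu
    obtain ⟨v, hv⟩ := aux_exists_pow_eq hcn huc
    have hθv : θ (v ^ q ^ d) = θ v := by
      have h := DFunLike.congr_fun hfix v
      simpa [MonoidHom.comp_apply, powMonoidHom_apply] using h
    have hθvn : θ (v ^ n) = 1 := by
      have h1 : θ (v ^ n) * θ v = 1 * θ v := by
        rw [one_mul, ← map_mul, ← pow_succ, hn1, hθv]
      exact mul_right_cancel h1
    rw [← hv]
    exact hθvn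
  -- lift θ through the norm
  set θ' := ν.liftOfRightInverse (Function.surjInv hsurj)
    (Function.rightInverse_surjInv hsurj) ⟨θ, hker⟩ with hθ'def
  refine ⟨E, hEne, θ', ?_⟩
  have := ν.liftOfRightInverse_comp (Function.surjInv hsurj)
    (Function.rightInverse_surjInv hsurj) ⟨θ, hker⟩
  exact this.symm

lemma aux_frob_apply {L : Type*} [Field L] (q : ℕ) (θ : Lˣ →* ℂˣ) (y : Lˣ) :
    frobAct q θ y = θ (y ^ q) := rfl

lemma aux_frob_iterate {L : Type*} [Field L] (q i : ℕ) (θ : Lˣ →* ℂˣ) :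
    (frobAct q (L := L))^[i] θ = θ.comp (powMonoidHom (q ^ i)) := by
  induction i with
  | zero => ext y; simp [powMonoidHom]
  | succ i ih =>
    rw [Function.iterate_succ_apply', ih]
    refine MonoidHom.ext fun y => ?_
    show θ ((y ^ q) ^ q ^ i) = θ (y ^ q ^ (i + 1))
    rw [← pow_mul, ← pow_succ']

section Main
variable {K L : Type*} [Field K] [Field L] [Fintype K] [Fintype L] [Algebra K L]

lemma aux_pow_card_units (y : Lˣ) {q m : ℕ} (hq : Fintype.card K = q)
    (hm : Module.finrank K L = m) : y ^ q ^ m = y := by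
  ext
  push_cast
  have hcardL : Fintype.card L = q ^ m := by
    rw [Module.card_fintype (Module.finBasis K L), Fintype.card_fin, hq, hm]
  rw [← hcardL, FiniteField.pow_card]

lemma aux_frob_m {q m : ℕ} (hq : Fintype.card K = q) (hm : Module.finrank K L = m)
    (θ : Lˣ →* ℂˣ) : (frobAct q (L := L))^[m] θ = θ := by
  rw [aux_frob_iterate]
  refine MonoidHom.ext fun y => ?_
  show θ (y ^ q ^ m) = θ y
  rw [aux_pow_card_units (K := K) y hq hm]

lemma aux_pow_bijective {q : ℕ} (hq : Fintype.card K = q) :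
    Function.Bijective (fun y : Lˣ => y ^ q) := by
  haveI : Fintype Lˣ := Fintype.ofFinite _
  rw [Fintype.bijective_iff_injective_and_card]
  refine ⟨?_, rfl⟩
  set p := ringChar K with hpdef
  haveI : CharP K p := ringChar.charP K
  obtain ⟨s, hp, hqs⟩ := FiniteField.card K p
  haveI : CharP L p := charP_of_injective_algebraMap (algebraMap K L).injective p
  haveI := Fact.mk hp
  haveI : ExpChar L p := ExpChar.prime hp
  intro y z hyz
  have h1 : (y : L) ^ q = (z : L) ^ q := by
    have := congrArg Units.val hyz
    push_cast at this
    exact this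
  rw [← hq, hqs] at h1
  have h2 : iterateFrobenius L p s (y : L) = iterateFrobenius L p s (z : L) := by
    rw [iterateFrobenius_def, iterateFrobenius_def]
    exact h1
  exact Units.ext ((iterateFrobenius L p s).injective h2)

lemma aux_stable {q m : ℕ} (hq : Fintype.card K = q) (hm : Module.finrank K L = m)
    (hm2 : 2 ≤ m) (θ : Lˣ →* ℂˣ) (hGP : IsGeneralPosition K θ)
    (χ₀ : Kˣ →* ℂˣ) (hres : charRestrict K θ = χ₀) {B : ℕ} (hdeg : charDegree θ ≤ B) :
    IsGeneralPosition K (frobAct q θ) ∧ charRestrict K (frobAct q θ) = χ₀ ∧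
      charDegree (frobAct q θ) ≤ B := by
  refine ⟨?_, ?_, ?_⟩
  · rintro ⟨E, hE, θ', hθ'⟩
    refine hGP ⟨E, hE, θ'.comp (powMonoidHom (q ^ (m - 1))), MonoidHom.ext fun y => ?_⟩
    have h1 : θ y = (frobAct q θ) (y ^ q ^ (m - 1)) := by
      rw [aux_frob_apply, ← pow_mul, ← pow_succ]
      have : m - 1 + 1 = m := by omega
      rw [this, aux_pow_card_units (K := K) y hq hm]
    rw [h1, hθ']
    show θ' (Units.map (Algebra.norm (↥E) : L →* ↥E) (y ^ q ^ (m - 1))) = _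
    rw [map_pow]
    rfl
  · rw [← hres]
    refine MonoidHom.ext fun x => ?_
    show θ ((Units.map (algebraMap K L : K →* L) x) ^ q) = θ (Units.map (algebraMap K L : K →* L) x)
    congr 1
    rw [← map_pow]
    congr 1
    ext
    push_cast
    rw [← hq, FiniteField.pow_card]
  · have hfield : charField (frobAct q θ) = charField θ := by
      unfold charField
      congr 1
      have : (Set.range fun g : Lˣ => ((frobAct q θ g : ℂˣ) : ℂ)) =
          (Set.range fun g : Lˣ => ((θ g : ℂˣ) : ℂ)) := by
        have hsurj := (aux_pow_bijective (K := K) (L := L) hq).surjective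
        ext z
        constructor
        · rintro ⟨g, rfl⟩; exact ⟨g ^ q, rfl⟩
        · rintro ⟨g, rfl⟩
          obtain ⟨y, hy⟩ := hsurj g
          refine ⟨y, ?_⟩
          show ((θ (y ^ q) : ℂˣ) : ℂ) = ((θ g : ℂˣ) : ℂ)
          rw [show y ^ q = g from hy]
      rw [this]
    unfold charDegree
    rw [hfield]
    exact hdeg

end Main

section Orbit
variable {α : Type*} {f : α → α} {m : ℕ}

lemma aux_iterate_mul (hfm : ∀ x, f^[m] x = x) : ∀ (k : ℕ) (x : α), f^[k * m] x = x := by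
  intro k
  induction k with
  | zero => intro x; simp
  | succ k ih =>
    intro x
    rw [add_mul, one_mul, Function.iterate_add_apply, ih (f^[m] x), hfm]

lemma aux_orbit_eq (hm : 0 < m) (hfm : ∀ x, f^[m] x = x) {x y : α}
    (hy : y ∈ Set.range fun i : ℕ => f^[i] x) :
    (Set.range fun i : ℕ => f^[i] y) = (Set.range fun i : ℕ => f^[i] x) := by
  obtain ⟨i, rfl⟩ := hy
  ext z
  constructor
  · rintro ⟨j, rfl⟩
    exact ⟨j + i, by simp only [Function.iterate_add_apply]⟩
  · rintro ⟨j, rfl⟩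
    refine ⟨j + i * (m - 1), ?_⟩
    have h1 : j + i * (m - 1) + i = j + i * m := by
      have h2 : m - 1 + 1 = m := by omega
      calc j + i * (m - 1) + i = j + i * (m - 1 + 1) := by ring
      _ = j + i * m := by rw [h2]
    show f^[j + i * (m-1)] (f^[i] x) = f^[j] x
    rw [← Function.iterate_add_apply, h1, Function.iterate_add_apply, aux_iterate_mul hfm i x]

lemma aux_orbit_ncard {x : α} (hm0 : 0 < m) (hmp : Function.minimalPeriod f x = m) :
    (Set.range fun i : ℕ => f^[i] x).ncard = m := by
  have hrange : (Set.range fun i : ℕ => f^[i] x) = (fun i : ℕ => f^[i] x) '' (Set.Iio m) := by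
    ext z
    constructor
    · rintro ⟨i, rfl⟩
      refine ⟨i % m, Set.mem_Iio.mpr (Nat.mod_lt _ hm0), ?_⟩
      rw [← hmp]
      exact Function.iterate_mod_minimalPeriod_eq
    · rintro ⟨i, _, rfl⟩
      exact ⟨i, rfl⟩
  rw [hrange, Set.ncard_image_of_injOn (hmp ▸ Function.iterate_injOn_Iio_minimalPeriod)]
  rw [← Finset.coe_Iio, Set.ncard_coe_finset, Nat.card_Iio]

lemma aux_odd_totient : ∀ n : ℕ, Odd n → n ≤ n.totient ^ 2 := by
  intro n
  induction n using Nat.strong_induction_on with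
  | _ n ih =>
    intro hodd
    rcases Nat.lt_or_ge n 2 with h2 | h2
    · interval_cases n
      · simp
      · simp
    · have hn0 : n ≠ 0 := by omega
      have hn1 : n ≠ 1 := by omega
      set p := n.minFac with hpdef
      have hp : p.Prime := Nat.minFac_prime hn1
      have hpdvd : p ∣ n := Nat.minFac_dvd n
      have hpodd : p ≠ 2 := by
        intro h2'
        rw [h2'] at hpdvd
        obtain ⟨u, rfl⟩ := hpdvd
        simp [Nat.odd_iff, Nat.mul_mod_right] at hodd
      have hp3 : 3 ≤ p := by
        have := hp.two_le
        omega
      set a := n.factorization p with hadef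
      have ha1 : 1 ≤ a := (Nat.Prime.factorization_pos_of_dvd hp hn0 hpdvd)
      set t := n / p ^ a with htdef
      have hnt : p ^ a * t = n := Nat.ordProj_mul_ordCompl_eq_self n p
      have hcop : Nat.Coprime p t := Nat.coprime_ordCompl hp hn0
      have hcop2 : Nat.Coprime (p ^ a) t := Nat.Coprime.pow_left a hcop
      have ht0 : 0 < t := Nat.ordCompl_pos p hn0
      have htlt : t < n := by
        have h1 : 1 < p ^ a := by
          calc 1 < p := by omega
          _ = p ^ 1 := (pow_one p).symm
          _ ≤ p ^ a := Nat.pow_le_pow_right (by omega) ha1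
        calc t = 1 * t := (one_mul t).symm
        _ < p ^ a * t := (Nat.mul_lt_mul_right ht0).mpr h1
        _ = n := hnt
      have htodd : Odd t := by
        rcases hodd with ⟨k, hk⟩
        rcases Nat.even_or_odd t with he | ho
        · exfalso
          obtain ⟨u, hu⟩ := he
          have : 2 ∣ n := by
            rw [← hnt, hu]
            exact ⟨p ^ a * u, by ring⟩
          omega
        · exact ho
      have ihtot := ih t htlt htodd
      have htotmul : n.totient = (p ^ a).totient * t.totient := by
        rw [← hnt]
        exact Nat.totient_mul hcop2
      have htp : (p ^ a).totient = p ^ (a - 1) * (p - 1) := Nat.totient_prime_pow hp ha1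
      have hkey : p ^ a ≤ (p ^ a).totient ^ 2 := by
        rw [htp, mul_pow]
        have h1 : p ≤ (p - 1) ^ 2 := by
          have hbe : p = (p - 1) + 1 := by omega
          have hb2 : 2 ≤ p - 1 := by omega
          set b := p - 1
          rw [hbe]
          nlinarith
        have h2 : p ^ (a - 1) ≤ (p ^ (a - 1)) ^ 2 := Nat.le_self_pow (by omega) _
        calc p ^ a = p ^ (a - 1) * p := by
              rw [← pow_succ]
              congr 1
              omega
        _ ≤ (p ^ (a - 1)) ^ 2 * (p - 1) ^ 2 := Nat.mul_le_mul h2 h1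
      calc n = p ^ a * t := hnt.symm
      _ ≤ (p ^ a).totient ^ 2 * t.totient ^ 2 := Nat.mul_le_mul hkey ihtot
      _ = n.totient ^ 2 := by rw [htotmul, mul_pow]

lemma aux_totient_lower {n : ℕ} (hn : 1 ≤ n) : n ≤ 2 * n.totient ^ 2 := by
  have hn0 : n ≠ 0 := by omega
  set a := n.factorization 2 with hadef
  set t := n / 2 ^ a with htdef
  have hnt : 2 ^ a * t = n := Nat.ordProj_mul_ordCompl_eq_self n 2
  have hcop : Nat.Coprime 2 t := Nat.coprime_ordCompl Nat.prime_two hn0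
  have hcop2 : Nat.Coprime (2 ^ a) t := Nat.Coprime.pow_left a hcop
  have ht0 : 0 < t := Nat.ordCompl_pos 2 hn0
  have htodd : Odd t := by
    rcases Nat.even_or_odd t with he | ho
    · exfalso
      have h2 : (2 : ℕ) ∣ t := even_iff_two_dvd.mp he
      have h3 : (2 : ℕ) ∣ 1 := hcop ▸ Nat.dvd_gcd dvd_rfl h2
      omega
    · exact ho
  have ihtot := aux_odd_totient t htodd
  have htotmul : n.totient = (2 ^ a).totient * t.totient := by
    rw [← hnt]; exact Nat.totient_mul hcop2
  rcases Nat.eq_zero_or_pos a with ha0 | ha1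
  · rw [ha0] at hnt htotmul
    simp only [pow_zero, one_mul, Nat.totient_one] at hnt htotmul
    calc n = t := hnt.symm
    _ ≤ t.totient ^ 2 := ihtot
    _ = n.totient ^ 2 := by rw [htotmul]
    _ ≤ 2 * n.totient ^ 2 := by omega
  · have htp : (2 ^ a).totient = 2 ^ (a - 1) := by
      rw [Nat.totient_prime_pow Nat.prime_two ha1]
      simp
    have hkey : 2 ^ a ≤ 2 * (2 ^ a).totient ^ 2 := by
      rw [htp, ← pow_mul]
      have h1 : a ≤ (a - 1) * 2 + 1 := by omega
      calc 2 ^ a ≤ 2 ^ ((a - 1) * 2 + 1) := Nat.pow_le_pow_right (by omega) h1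
      _ = 2 * 2 ^ ((a - 1) * 2) := by rw [pow_succ]; ring
    calc n = 2 ^ a * t := hnt.symm
    _ ≤ (2 * (2 ^ a).totient ^ 2) * t.totient ^ 2 := Nat.mul_le_mul hkey ihtot
    _ = 2 * n.totient ^ 2 := by rw [htotmul, mul_pow]; ring

lemma aux_finrank_adjoin_root_of_unity {ζ : ℂ} {n : ℕ} (hn : 1 ≤ n) (hζ : ζ ^ n = 1) :
    Module.finrank ℚ ↥(IntermediateField.adjoin ℚ {ζ}) = (orderOf ζ).totient := by
  have hfin : IsOfFinOrder ζ := isOfFinOrder_iff_pow_eq_one.mpr ⟨n, by omega, hζ⟩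
  set n₀ := orderOf ζ with hn₀
  have hn₀pos : 0 < n₀ := hfin.orderOf_pos
  have hprim : IsPrimitiveRoot ζ n₀ := IsPrimitiveRoot.orderOf ζ
  lift n₀ to ℕ+ using hn₀pos with n₀'
  haveI := IsPrimitiveRoot.adjoin_isCyclotomicExtension ℚ (n := n₀') hprim
  have h1 : Module.finrank ℚ ↥(Algebra.adjoin ℚ {ζ}) = (n₀' : ℕ).totient :=
    IsCyclotomicExtension.finrank (↥(Algebra.adjoin ℚ {ζ}))
      (cyclotomic.irreducible_rat n₀'.pos)
  rw [← h1]
  have hint : IsIntegral ℚ ζ := by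
    refine IsAlgebraic.isIntegral ⟨X ^ n - 1, ?_, ?_⟩
    · have := X_pow_sub_C_ne_zero (by omega : 0 < n) (1 : ℚ)
      simpa using this
    · simp [hζ]
  have h2 : (IntermediateField.adjoin ℚ {ζ}).toSubalgebra = Algebra.adjoin ℚ {ζ} := by
    have := IntermediateField.adjoin_simple_toSubalgebra_of_isAlgebraic (F := ℚ) (α := ζ) hint.isAlgebraic
    simpa using this
  exact congrArg (fun s : Subalgebra ℚ ℂ => Module.finrank ℚ ↥s) h2

lemma aux_Z_finite (B : ℕ) : {ζ : ℂ | (∃ n : ℕ, 1 ≤ n ∧ ζ ^ n = 1) ∧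
    Module.finrank ℚ ↥(IntermediateField.adjoin ℚ {ζ}) ≤ B}.Finite := by
  have hsub : {ζ : ℂ | (∃ n : ℕ, 1 ≤ n ∧ ζ ^ n = 1) ∧
      Module.finrank ℚ ↥(IntermediateField.adjoin ℚ {ζ}) ≤ B} ⊆
      ⋃ n ∈ Finset.Icc 1 (2 * B ^ 2), {ζ : ℂ | ζ ^ n = 1} := by
    rintro ζ ⟨⟨n, hn1, hζ⟩, hdeg⟩
    have hfin : IsOfFinOrder ζ := isOfFinOrder_iff_pow_eq_one.mpr ⟨n, by omega, hζ⟩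
    have hord : 0 < orderOf ζ := hfin.orderOf_pos
    have h1 := aux_finrank_adjoin_root_of_unity hn1 hζ
    rw [h1] at hdeg
    have h2 : orderOf ζ ≤ 2 * B ^ 2 := by
      calc orderOf ζ ≤ 2 * (orderOf ζ).totient ^ 2 := aux_totient_lower hord
      _ ≤ 2 * B ^ 2 := by nlinarith
    refine Set.mem_biUnion (Finset.mem_Icc.mpr ⟨hord, h2⟩) ?_
    exact pow_orderOf_eq_one ζ
  refine Set.Finite.subset ?_ hsub
  refine Set.Finite.biUnion (Finset.Icc 1 (2 * B ^ 2)).finite_toSet ?_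
  intro n hn
  rcases Nat.eq_zero_or_pos n with h0 | h0
  · simp [h0] at hn
  · have : {ζ : ℂ | ζ ^ n = 1} ⊆ ↑(nthRootsFinset n (1 : ℂ)) := by
      intro ζ hζ
      rw [Finset.mem_coe, mem_nthRootsFinset h0]
      exact hζ
    exact Set.Finite.subset (nthRootsFinset n (1 : ℂ)).finite_toSet this

end Orbit

end AuxLemmas

/-- Let `K ⊆ L` be finite fields with `|K| = q` and `[L : K] = m ≥ 2`, let `χ₀` be a
character of `Kˣ`, and let `B ≥ 1`.  Let `S` be the set of characters `θ` of `Lˣ` in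
general position with `θ|_{Kˣ} = χ₀` and `[ℚ(θ) : ℚ] ≤ B`.  Then `S` is stable under the
Frobenius action `θ ↦ θ^{(q)}`, every orbit of this action on `S` has exactly `m`
elements, and consequently the number of orbits is at most `f(B)/m`. -/
theorem frobenius_orbits_on_bounded_degree_characters
    (K L : Type*) [Field K] [Field L] [Fintype K] [Fintype L] [Algebra K L]
    (q m : ℕ) (hq : Fintype.card K = q) (hm : Module.finrank K L = m) (hm2 : 2 ≤ m)
    (χ₀ : Kˣ →* ℂˣ) (B : ℕ) (hB : 1 ≤ B)
    (S : Set (Lˣ →* ℂˣ))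
    (hS : S = {θ | IsGeneralPosition K θ ∧ charRestrict K θ = χ₀ ∧ charDegree θ ≤ B}) :
    (∀ θ ∈ S, frobAct q θ ∈ S) ∧
    (∀ θ ∈ S, (Set.range fun i : ℕ => (frobAct q (L := L))^[i] θ).ncard = m) ∧
    (Nat.card {T : Set (Lˣ →* ℂˣ) //
        ∃ θ ∈ S, T = Set.range fun i : ℕ => (frobAct q (L := L))^[i] θ} : ℝ) ≤
      (rootsOfUnityCount B : ℝ) / m := by
  classical
  subst hS
  set S : Set (Lˣ →* ℂˣ) :=
    {θ | IsGeneralPosition K θ ∧ charRestrict K θ = χ₀ ∧ charDegree θ ≤ B} with hSdef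
  set f := frobAct q (L := L) with hfdef
  have hm0 : 0 < m := by omega
  have hfm : ∀ θ : Lˣ →* ℂˣ, f^[m] θ = θ := fun θ => aux_frob_m hq hm θ
  -- Part 1 : stability
  have P1 : ∀ θ ∈ S, f θ ∈ S := by
    rintro θ ⟨hGP, hres, hdeg⟩
    exact aux_stable hq hm hm2 θ hGP χ₀ hres hdeg
  have hOrbS : ∀ θ ∈ S, ∀ i : ℕ, f^[i] θ ∈ S := by
    intro θ hθ i
    induction i with
    | zero => exact hθ
    | succ i ih => rw [Function.iterate_succ_apply']; exact P1 _ ih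
  -- minimal periods
  have hmp : ∀ θ ∈ S, Function.minimalPeriod f θ = m := by
    rintro θ hθ
    have hper : Function.IsPeriodicPt f m θ := hfm θ
    have hdvd : Function.minimalPeriod f θ ∣ m := hper.minimalPeriod_dvd
    set d := Function.minimalPeriod f θ with hddef
    have hd0 : 0 < d := hper.minimalPeriod_pos hm0
    rcases eq_or_lt_of_le (Nat.le_of_dvd hm0 hdvd) with heq | hlt
    · exact heq
    · exfalso
      have hfix0 : f^[d] θ = θ := Function.iterate_minimalPeriod
      rw [aux_frob_iterate] at hfix0
      obtain ⟨E, hE, θ', hθ'⟩ := aux_exists_factorization K L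
        (by rw [hm]; exact hdvd) hd0 (by rw [hm]; exact hlt) θ (by rw [hq]; exact hfix0)
      exact hθ.1 ⟨E, hE, θ', hθ'⟩
  have P2 : ∀ θ ∈ S, (Set.range fun i : ℕ => f^[i] θ).ncard = m :=
    fun θ hθ => aux_orbit_ncard hm0 (hmp θ hθ)
  refine ⟨P1, P2, ?_⟩
  -- Part 3 : counting
  set Zset : Set ℂ := {ζ : ℂ | (∃ n : ℕ, 1 ≤ n ∧ ζ ^ n = 1) ∧
    Module.finrank ℚ ↥(IntermediateField.adjoin ℚ {ζ}) ≤ B} with hZdef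
  have hZfin : Zset.Finite := aux_Z_finite B
  haveI : Finite ↥Zset := hZfin.to_subtype
  haveI : Fintype Lˣ := Fintype.ofFinite _
  obtain ⟨g, hg⟩ := IsCyclic.exists_generator (α := Lˣ)
  set N := Fintype.card Lˣ with hNdef
  have hN1 : 1 ≤ N := Fintype.card_pos
  -- the injection from S into Zset
  have hvalmem : ∀ θ : Lˣ →* ℂˣ, θ ∈ S → ((θ g : ℂˣ) : ℂ) ∈ Zset := by
    rintro θ ⟨hGP, hres, hdeg⟩
    constructor
    · refine ⟨N, hN1, ?_⟩
      have h1 : θ g ^ N = 1 := by rw [← map_pow, pow_card_eq_one, map_one]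
      simpa using congrArg Units.val h1
    · -- degree bound
      have hintegral : ∀ z ∈ (Set.range fun y : Lˣ => ((θ y : ℂˣ) : ℂ)), IsIntegral ℚ z := by
        rintro z ⟨y, rfl⟩
        refine IsAlgebraic.isIntegral ⟨Polynomial.X ^ N - 1, ?_, ?_⟩
        · have := Polynomial.X_pow_sub_C_ne_zero (by omega : 0 < N) (1 : ℚ)
          simpa using this
        · have h1 : θ y ^ N = 1 := by rw [← map_pow, pow_card_eq_one, map_one]
          have h2 : ((θ y : ℂˣ) : ℂ) ^ N = 1 := by simpa using congrArg Units.val h1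
          simp [h2]
      haveI : Finite ↥(Set.range fun y : Lˣ => ((θ y : ℂˣ) : ℂ)) :=
        (Set.finite_range _).to_subtype
      haveI hFD : FiniteDimensional ℚ ↥(charField θ) :=
        IntermediateField.finiteDimensional_adjoin hintegral
      have hle : IntermediateField.adjoin ℚ {((θ g : ℂˣ) : ℂ)} ≤ charField θ := by
        rw [IntermediateField.adjoin_le_iff]
        intro z hz
        rw [Set.mem_singleton_iff] at hz
        subst hz
        exact IntermediateField.subset_adjoin ℚ _ ⟨g, rfl⟩
      have hfr : Module.finrank ℚ ↥(IntermediateField.adjoin ℚ {((θ g : ℂˣ) : ℂ)}) ≤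
          Module.finrank ℚ ↥(charField θ) :=
        LinearMap.finrank_le_finrank_of_injective
          (f := (IntermediateField.inclusion hle).toLinearMap)
          (fun a b hab => by
            have := congrArg Subtype.val hab
            exact Subtype.ext this)
      exact hfr.trans hdeg
  set Φ : ↥S → ↥Zset := fun θ => ⟨((θ.1 g : ℂˣ) : ℂ), hvalmem θ.1 θ.2⟩ with hΦdef
  have hΦinj : Function.Injective Φ := by
    rintro ⟨θ₁, h₁⟩ ⟨θ₂, h₂⟩ h12
    have hval : θ₁ g = θ₂ g := by
      have := congrArg Subtype.val h12
      exact Units.ext this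
    refine Subtype.ext (MonoidHom.ext fun y => ?_)
    obtain ⟨k, rfl⟩ := hg y
    rw [map_zpow, map_zpow, hval]
  haveI hSfinite : Finite ↥S := Finite.of_injective Φ hΦinj
  have hSfin : S.Finite := Set.finite_coe_iff.mp hSfinite
  have hcardSZ : Nat.card ↥S ≤ Nat.card ↥Zset := Nat.card_le_card_of_injective Φ hΦinj
  -- counting orbits
  set orb : (Lˣ →* ℂˣ) → Set (Lˣ →* ℂˣ) := fun θ => Set.range fun i : ℕ => f^[i] θ with horbdef
  set F := hSfin.toFinset with hFdef
  set G := F.image orb with hGdef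
  have hfib : ∀ T ∈ G, (F.filter (fun θ => orb θ = T)).card = m := by
    intro T hT
    obtain ⟨θ₀, hθ₀F, rfl⟩ := Finset.mem_image.mp hT
    have hθ₀S : θ₀ ∈ S := hSfin.mem_toFinset.mp hθ₀F
    have hset : (↑(F.filter (fun θ => orb θ = orb θ₀)) : Set (Lˣ →* ℂˣ)) = orb θ₀ := by
      ext ψ
      simp only [Finset.coe_filter, Set.mem_setOf_eq, hSfin.mem_toFinset]
      constructor
      · rintro ⟨hψS, hψorb⟩
        rw [← hψorb]
        exact ⟨0, rfl⟩
      · intro hψ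
        refine ⟨?_, aux_orbit_eq hm0 hfm hψ⟩
        obtain ⟨i, hi⟩ := hψ
        rw [← hi]
        exact hSfin.mem_toFinset.mpr (hOrbS θ₀ hθ₀S i)
    have := congrArg Set.ncard hset
    rw [Set.ncard_coe_finset] at this
    rw [this]
    exact P2 θ₀ hθ₀S
  have hcount : F.card = G.card * m := by
    rw [Finset.card_eq_sum_card_fiberwise (f := orb) (t := G)
      (fun θ hθ => Finset.mem_image_of_mem orb hθ)]
    rw [Finset.sum_congr rfl hfib, Finset.sum_const, smul_eq_mul]
  -- identify the orbit-set cardinality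
  have horbset : {T : Set (Lˣ →* ℂˣ) | ∃ θ ∈ S, T = orb θ} = ↑G := by
    ext T
    simp only [Set.mem_setOf_eq, hGdef, Finset.coe_image, Set.mem_image, Finset.mem_coe,
      hSfin.mem_toFinset]
    constructor
    · rintro ⟨θ, hθ, rfl⟩; exact ⟨θ, hSfin.mem_toFinset.mpr hθ, rfl⟩
    · rintro ⟨θ, hθ, rfl⟩; exact ⟨θ, hSfin.mem_toFinset.mp hθ, rfl⟩
  have hcardorb : Nat.card {T : Set (Lˣ →* ℂˣ) //
      ∃ θ ∈ S, T = Set.range fun i : ℕ => (frobAct q (L := L))^[i] θ} = G.card := by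
    have h1 : Nat.card {T : Set (Lˣ →* ℂˣ) // ∃ θ ∈ S, T = orb θ} =
        Set.ncard {T : Set (Lˣ →* ℂˣ) | ∃ θ ∈ S, T = orb θ} :=
      Nat.card_coe_set_eq _
    rw [h1, horbset, Set.ncard_coe_finset]
  have hScard : Nat.card ↥S = F.card := by
    rw [Nat.card_coe_set_eq, Set.ncard_eq_toFinset_card S hSfin]
  have hfinal : G.card * m ≤ rootsOfUnityCount B := by
    have h2 : rootsOfUnityCount B = Nat.card ↥Zset := rfl
    rw [← hcount, h2, ← hScard]
    exact hcardSZ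
  rw [hcardorb]
  rw [le_div_iff₀ (by exact_mod_cast hm0 : (0:ℝ) < (m:ℝ))]
  exact_mod_cast hfinal
end

section
/- Let p be a prime and let n ≥ 1, r ≥ 1 be integers. The set B of elements g of GL_n(ℤ/p^rℤ) whose underlying matrix is upper triangular (i.e., the (i,j) entry is 0 whenever i > j) is a subgroup of GL_n(ℤ/p^rℤ), and its index satisfies [GL_n(ℤ/p^rℤ) : B] ≤ 2^n · p^{r·n(n−1)/2}. -/
section Aux

variable {R : Type*} [CommRing R] {n : ℕ}

/-- Parameter space for invertible upper-triangular matrices. -/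
private abbrev TriParam (R : Type*) [CommRing R] (n : ℕ) : Type _ :=
  (Fin n → Rˣ) × ((j : Fin n) → Fin (j : ℕ) → R)

private def triMat (x : TriParam R n) : Matrix (Fin n) (Fin n) R := fun i j =>
  if h : (i : ℕ) < (j : ℕ) then x.2 j ⟨i, h⟩ else if i = j then (x.1 i : R) else 0

private lemma triMat_bt (x : TriParam R n) : (triMat x).BlockTriangular id := by
  intro i j hij
  unfold triMat
  rw [dif_neg (by exact fun h => absurd hij (by simpa using h.le.not_gt)),
    if_neg (by exact fun h => absurd hij (h ▸ lt_irrefl _))]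

private lemma triMat_diag (x : TriParam R n) (i : Fin n) : triMat x i i = (x.1 i : R) := by
  simp [triMat]

private lemma triMat_isUnit (x : TriParam R n) : IsUnit (triMat x) := by
  rw [Matrix.isUnit_iff_isUnit_det, Matrix.det_of_upperTriangular (triMat_bt x)]
  simp_rw [triMat_diag]
  rw [← Units.coe_prod]
  exact Units.isUnit _

private lemma triMat_inj : Function.Injective (triMat (R := R) (n := n)) := by
  intro x y hMeq
  obtain ⟨d, u⟩ := x
  obtain ⟨d', u'⟩ := y
  have hd : d = d' := by
    funext i
    have := congrFun (congrFun hMeq i) i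
    rw [triMat_diag, triMat_diag] at this
    exact Units.ext this
  have hu : u = u' := by
    funext j k
    have := congrFun (congrFun hMeq ⟨k, k.isLt.trans j.isLt⟩) j
    simpa only [triMat, dif_pos k.isLt] using this
  rw [hd, hu]

end Aux

/-- Let `p` be a prime and `n ≥ 1`, `r ≥ 1` integers.  The set of elements of
`GL n (ℤ/p^rℤ)` whose underlying matrix is upper triangular (i.e. the `(i,j)` entry is
`0` whenever `i > j`) is a subgroup `B` of `GL n (ℤ/p^rℤ)`, and its index satisfies
`[GL n (ℤ/p^rℤ) : B] ≤ 2 ^ n * p ^ (r * n * (n - 1) / 2)`. -/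
theorem upper_triangular_subgroup_index_le
    (p : ℕ) (hp : p.Prime) (n r : ℕ) (hn : 1 ≤ n) (hr : 1 ≤ r) :
    ∃ B : Subgroup (GL (Fin n) (ZMod (p ^ r))),
      (B : Set (GL (Fin n) (ZMod (p ^ r)))) =
        {g : GL (Fin n) (ZMod (p ^ r)) | ∀ i j : Fin n, j < i →
          (g : Matrix (Fin n) (Fin n) (ZMod (p ^ r))) i j = 0} ∧
      B.index ≤ 2 ^ n * p ^ (r * (n * (n - 1)) / 2) := by
  haveI : NeZero (p ^ r) := ⟨pow_ne_zero r hp.ne_zero⟩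
  set R := ZMod (p ^ r) with hRdef
  set B : Subgroup (GL (Fin n) R) := {
    carrier := {g : GL (Fin n) R | ∀ i j : Fin n, j < i →
      (g : Matrix (Fin n) (Fin n) R) i j = 0}
    one_mem' := by
      intro i j hij
      show (1 : Matrix (Fin n) (Fin n) R) i j = 0
      exact Matrix.one_apply_ne hij.ne'
    mul_mem' := by
      intro a b ha hb i j hij
      show ((a : Matrix (Fin n) (Fin n) R) * b) i j = 0
      rw [Matrix.mul_apply]
      refine Finset.sum_eq_zero fun k _ => ?_
      rcases lt_or_ge k i with hk | hk
      · rw [ha i k hk, zero_mul]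
      · rw [hb k j (lt_of_lt_of_le hij hk), mul_zero]
    inv_mem' := by
      intro g hg i j hij
      have hBT : Matrix.BlockTriangular (g : Matrix (Fin n) (Fin n) R) id :=
        fun i j h => hg i j h
      haveI : Invertible (g : Matrix (Fin n) (Fin n) R) := g.invertible
      have := Matrix.blockTriangular_inv_of_blockTriangular hBT (i := i) (j := j) hij
      rwa [← Matrix.coe_units_inv] at this } with hB
  refine ⟨B, rfl, ?_⟩
  -- numerics
  set m := n * (n - 1) / 2 with hmdef
  have heven : Even (n * (n - 1)) := by
    have := Nat.even_mul_succ_self (n - 1)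
    rwa [Nat.sub_add_cancel hn, mul_comm] at this
  have hm2 : 2 * m = n * (n - 1) := by
    rw [hmdef, mul_comm]
    exact Nat.div_mul_cancel heven.two_dvd
  have hexp : r * (n * (n - 1)) / 2 = r * m := by
    rw [← hm2, show r * (2 * m) = r * m * 2 by ring, Nat.mul_div_cancel _ two_pos]
  rw [hexp]
  -- injection of the parameter space into B
  have hmemB : ∀ x : TriParam R n, (triMat_isUnit x).unit ∈ B := by
    intro x i j hij
    show ((triMat_isUnit x).unit : Matrix (Fin n) (Fin n) R) i j = 0
    rw [(triMat_isUnit x).unit_spec]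
    exact triMat_bt x hij
  set f : TriParam R n → B := fun x => ⟨(triMat_isUnit x).unit, hmemB x⟩ with hf
  have hfinj : Function.Injective f := by
    intro x y hxy
    refine triMat_inj ?_
    have := congrArg (fun z : B => ((z : GL (Fin n) R) : Matrix (Fin n) (Fin n) R)) hxy
    simpa only [hf, (triMat_isUnit x).unit_spec, (triMat_isUnit y).unit_spec] using this
  -- cardinalities
  have cardR : Fintype.card R = p ^ r := ZMod.card _
  have cardP : Nat.card (TriParam R n) = (Fintype.card Rˣ) ^ n * (p ^ r) ^ m := by
    have hsum : ∑ j : Fin n, (j : ℕ) = m := by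
      have h1 : (∑ j : Fin n, (j : ℕ)) = ∑ i ∈ Finset.range n, i :=
        Fin.sum_univ_eq_sum_range (fun i => i) n
      have h2 := Finset.sum_range_id_mul_two n
      omega
    rw [Nat.card_eq_fintype_card]
    show Fintype.card ((Fin n → Rˣ) × ((j : Fin n) → Fin (j : ℕ) → R)) = _
    rw [Fintype.card_prod, Fintype.card_fun, Fintype.card_fin, Fintype.card_pi]
    congr 1
    calc ∏ j : Fin n, Fintype.card (Fin (j : ℕ) → R)
        = ∏ j : Fin n, (p ^ r) ^ (j : ℕ) := by
          refine Finset.prod_congr rfl fun j _ => ?_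
          rw [Fintype.card_fun, Fintype.card_fin, cardR]
      _ = (p ^ r) ^ (∑ j : Fin n, (j : ℕ)) := Finset.prod_pow_eq_pow_sum _ _ _
      _ = (p ^ r) ^ m := by rw [hsum]
  have cardU : Fintype.card Rˣ = p ^ (r - 1) * (p - 1) := by
    rw [ZMod.card_units_eq_totient, Nat.totient_prime_pow hp hr]
  have cardG : Nat.card (GL (Fin n) R) ≤ (p ^ r) ^ (n * n) := by
    have hinj : Function.Injective
        (Units.val : GL (Fin n) R → Matrix (Fin n) (Fin n) R) := fun _ _ h => Units.ext h
    calc Nat.card (GL (Fin n) R) ≤ Nat.card (Matrix (Fin n) (Fin n) R) :=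
          Nat.card_le_card_of_injective _ hinj
      _ = (p ^ r) ^ (n * n) := by
          show Nat.card (Fin n → Fin n → R) = _
          rw [Nat.card_fun, Nat.card_fun, Nat.card_eq_fintype_card, Nat.card_eq_fintype_card,
            Fintype.card_fin, cardR, ← pow_mul]
  -- the key numeric inequality
  have hnn : n * n = n + 2 * m := by
    have h1 : n * n = n * 1 + n * (n - 1) := by
      rw [← Nat.mul_add]
      congr 1
      omega
    omega
  have hkey : (p ^ r) ^ (n * n) ≤ 2 ^ n * p ^ (r * m) * Nat.card (TriParam R n) := by
    rw [cardP, cardU]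
    have hp2 : p ^ r ≤ 2 * (p ^ (r - 1) * (p - 1)) := by
      have hpr : p ^ r = p ^ (r - 1) * p := by
        rw [← pow_succ]
        congr 1
        omega
      have hple : p ≤ 2 * (p - 1) := by
        have := hp.two_le
        omega
      calc p ^ r = p ^ (r - 1) * p := hpr
        _ ≤ p ^ (r - 1) * (2 * (p - 1)) := Nat.mul_le_mul_left _ hple
        _ = 2 * (p ^ (r - 1) * (p - 1)) := by ring
    calc (p ^ r) ^ (n * n) = (p ^ r) ^ n * ((p ^ r) ^ m * (p ^ r) ^ m) := by
          rw [hnn, pow_add]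
          ring
      _ ≤ (2 * (p ^ (r - 1) * (p - 1))) ^ n * ((p ^ r) ^ m * (p ^ r) ^ m) :=
          Nat.mul_le_mul_right _ (Nat.pow_le_pow_left hp2 n)
      _ = 2 ^ n * p ^ (r * m) * ((p ^ (r - 1) * (p - 1)) ^ n * (p ^ r) ^ m) := by
          rw [mul_pow, pow_mul]
          ring
  -- put it together
  haveI : Nonempty (↥B) := ⟨1⟩
  have hcardB_pos : 0 < Nat.card B := Nat.card_pos
  have hPB : Nat.card (TriParam R n) ≤ Nat.card B := Nat.card_le_card_of_injective f hfinj
  have hmain : B.index * Nat.card B ≤ 2 ^ n * p ^ (r * m) * Nat.card B := by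
    rw [B.index_mul_card]
    calc Nat.card (GL (Fin n) R) ≤ (p ^ r) ^ (n * n) := cardG
      _ ≤ 2 ^ n * p ^ (r * m) * Nat.card (TriParam R n) := hkey
      _ ≤ 2 ^ n * p ^ (r * m) * Nat.card B := Nat.mul_le_mul_left _ hPB
  exact Nat.le_of_mul_le_mul_right hmain hcardB_pos
end
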